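/- arXiv:2410.10635 — 4 statements merged into one kernel-verified Lean document; each statement's English description precedes it below -/
import Mathlib

section
/- Let F be a field and ψ₀ : F → ℂˣ a nontrivial additive character (ψ₀(x+y) = ψ₀(x)ψ₀(y) and ψ₀ is not identically 1). For n ≥ 1 let U_n(F) ≤ GL_n(F) be the group of upper triangular matrices with all diagonal entries 1, and define ψ_n : U_n(F) → ℂˣ by ψ_n(u) = ψ₀(u_{1,2} + u_{2,3} + ⋯ + u_{n−1,n}). Say that a subgroup H of GL_n(F) is disjoint from (U_n, ψ_n) if for every g ∈ GL_n(F) the restriction of ψ_n to U_n(F) ∩ gHg⁻¹ is not identically 1. Theorem: let m, k ≥ 1 and let H be a subgroup of GL_k(F) that is disjoint from (U_k, ψ_k). Then the subgroup H_m = { [[I_m, X],[0, h]] : h ∈ H, X an arbitrary m×k matrix over F } of GL_{m+k}(F) is disjoint from (U_{m+k}, ψ_{m+k}). -/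
open scoped MatrixGroups Matrix

namespace Stmt0

variable {F : Type*} [Field F]

/-- A matrix is upper triangular unipotent: zeros below the diagonal, ones on the diagonal. -/
def IsUniUpper {n : ℕ} (u : Matrix (Fin n) (Fin n) F) : Prop :=
  (∀ i j : Fin n, (j : ℕ) < (i : ℕ) → u i j = 0) ∧ (∀ i, u i i = 1)

/-- The generic character `ψ_n(u) = ψ₀(u_{1,2} + u_{2,3} + ⋯ + u_{n-1,n})` of `U_n(F)`
(given here by the same formula on all matrices). -/
def psiN (ψ₀ : F → ℂˣ) {n : ℕ} (u : Matrix (Fin n) (Fin n) F) : ℂˣ :=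
  ψ₀ (∑ i : Fin n, ∑ j : Fin n, if (j : ℕ) = (i : ℕ) + 1 then u i j else 0)

/-- A set `H` of invertible `n × n` matrices is disjoint from `(U_n, ψ_n)` if for every
`g ∈ GL_n(F)` the restriction of `ψ_n` to `U_n(F) ∩ g H g⁻¹` is not identically `1`,
i.e. there is an upper triangular unipotent `u` with `g⁻¹ u g ∈ H` and `ψ_n(u) ≠ 1`. -/
def DisjointFromWhittaker (ψ₀ : F → ℂˣ) {n : ℕ} (H : Set (GL (Fin n) F)) : Prop :=
  ∀ g : GL (Fin n) F, ∃ u : GL (Fin n) F,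
    IsUniUpper u.val ∧ g⁻¹ * u * g ∈ H ∧ psiN ψ₀ u.val ≠ 1


open Matrix Equiv Finset

set_option linter.unusedSectionVars false
set_option linter.unnecessarySimpa false
set_option linter.unnecessarySeqFocus false
set_option linter.unusedTactic false

section PermMat

variable {ι : Type*} [DecidableEq ι] [Fintype ι]

/-- permutation matrix: `permMat σ * e_j = e_{σ j}`. -/
def permMat (σ : Equiv.Perm ι) : Matrix ι ι F :=
  Matrix.of fun i j => if σ j = i then (1 : F) else 0

lemma permMat_mul_apply (σ : Perm ι) (M : Matrix ι ι F) (i j : ι) :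
    (permMat (F := F) σ * M) i j = M (σ.symm i) j := by
  simp only [Matrix.mul_apply, permMat, Matrix.of_apply, ite_mul, one_mul, zero_mul]
  rw [Finset.sum_eq_single (σ.symm i)]
  · simp
  · intro b _ hb
    rw [if_neg]
    intro h; exact hb (by simp [← h])
  · simp

lemma mul_permMat_apply (σ : Perm ι) (M : Matrix ι ι F) (i j : ι) :
    (M * permMat (F := F) σ) i j = M i (σ j) := by
  simp only [Matrix.mul_apply, permMat, Matrix.of_apply, mul_ite, mul_one, mul_zero]
  rw [Finset.sum_eq_single (σ j)] <;> simp +contextual [eq_comm]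

lemma permMat_mul_permMat (σ ρ : Perm ι) :
    (permMat σ : Matrix ι ι F) * permMat ρ = permMat (σ * ρ) := by
  ext i j
  rw [mul_permMat_apply]
  rfl

lemma permMat_one : (permMat (1 : Perm ι) : Matrix ι ι F) = 1 := by
  ext i j
  simp [permMat, Matrix.one_apply, eq_comm]

lemma permMat_mul_permMat_inv (σ : Perm ι) :
    (permMat σ : Matrix ι ι F) * permMat σ⁻¹ = 1 := by
  rw [permMat_mul_permMat, mul_inv_cancel, permMat_one]

lemma permMat_inv (σ : Perm ι) : (permMat σ : Matrix ι ι F)⁻¹ = permMat σ⁻¹ :=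
  Matrix.inv_eq_right_inv (permMat_mul_permMat_inv σ)

lemma isUnit_permMat (σ : Perm ι) : IsUnit (permMat σ : Matrix ι ι F) :=
  ⟨⟨permMat σ, permMat σ⁻¹, permMat_mul_permMat_inv σ, by
    rw [permMat_mul_permMat, inv_mul_cancel, permMat_one]⟩, rfl⟩

lemma conj_permMat_apply (σ : Perm ι) (M : Matrix ι ι F) (i j : ι) :
    ((permMat σ⁻¹ * M * permMat σ : Matrix ι ι F)) i j = M (σ i) (σ j) := by
  rw [mul_permMat_apply, permMat_mul_apply]
  rfl

end PermMat


section UniUpper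
variable {n : ℕ} {a b u : Matrix (Fin n) (Fin n) F}

lemma IsUniUpper.blockTriangular (h : IsUniUpper u) : u.BlockTriangular id :=
  fun i j hij => h.1 i j hij

lemma isUniUpper_one : IsUniUpper (1 : Matrix (Fin n) (Fin n) F) :=
  ⟨fun i j hij => Matrix.one_apply_ne (by rintro rfl; omega), fun i => Matrix.one_apply_eq i⟩

lemma IsUniUpper.mul (ha : IsUniUpper a) (hb : IsUniUpper b) : IsUniUpper (a * b) := by
  constructor
  · intro i j hij
    rw [Matrix.mul_apply]
    apply Finset.sum_eq_zero
    intro l _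
    rcases lt_or_ge (l : ℕ) (i : ℕ) with h | h
    · rw [ha.1 i l h, zero_mul]
    · rw [hb.1 l j (lt_of_lt_of_le hij h), mul_zero]
  · intro i
    rw [Matrix.mul_apply]
    rw [Finset.sum_eq_single i]
    · rw [ha.2, hb.2, one_mul]
    · intro l _ hl
      rcases lt_or_ge (l : ℕ) (i : ℕ) with h | h
      · rw [ha.1 i l h, zero_mul]
      · have : (i : ℕ) < (l : ℕ) := lt_of_le_of_ne h (by simpa [Fin.ext_iff, eq_comm] using hl)
        rw [hb.1 l i this, mul_zero]
    · simp

lemma IsUniUpper.det_eq_one (h : IsUniUpper u) : u.det = 1 := by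
  rw [Matrix.det_of_upperTriangular h.blockTriangular]
  simp [h.2]

lemma IsUniUpper.isUnit (h : IsUniUpper u) : IsUnit u :=
  (Matrix.isUnit_iff_isUnit_det u).2 (by rw [h.det_eq_one]; exact isUnit_one)

lemma IsUniUpper.inv (h : IsUniUpper u) : IsUniUpper u⁻¹ := by
  haveI := u.invertibleOfIsUnitDet (by rw [h.det_eq_one]; exact isUnit_one)
  have hbt : u⁻¹.BlockTriangular id :=
    Matrix.blockTriangular_inv_of_blockTriangular h.blockTriangular
  refine ⟨fun i j hij => hbt hij, fun i => ?_⟩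
  have h1 : (u⁻¹ * u) i i = 1 := by
    rw [Matrix.nonsing_inv_mul u (by rw [h.det_eq_one]; exact isUnit_one)]
    simp
  rw [Matrix.mul_apply] at h1
  rw [Finset.sum_eq_single i] at h1
  · rwa [h.2, mul_one] at h1
  · intro l _ hl
    rcases lt_or_ge (l : ℕ) (i : ℕ) with hc | hc
    · rw [hbt (show (id l : Fin n) < id i from hc), zero_mul]
    · have : (i : ℕ) < (l : ℕ) := lt_of_le_of_ne hc (by simpa [Fin.ext_iff, eq_comm] using hl)
      rw [h.1 l i this, mul_zero]
  · simp

lemma mul_superdiag (ha : IsUniUpper a) (hb : IsUniUpper b) {i j : Fin n}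
    (hij : (j : ℕ) = (i : ℕ) + 1) : (a * b) i j = a i j + b i j := by
  have hne : i ≠ j := by intro h; rw [h] at hij; omega
  rw [Matrix.mul_apply]
  rw [← Finset.sum_subset (Finset.subset_univ ({i, j} : Finset (Fin n)))]
  · rw [Finset.sum_pair hne, ha.2, hb.2, one_mul, mul_one, add_comm]
  · intro l _ hl
    simp only [Finset.mem_insert, Finset.mem_singleton, not_or] at hl
    rcases lt_or_ge (l : ℕ) (i : ℕ) with hc | hc
    · rw [ha.1 i l hc, zero_mul]
    · have hi : (i : ℕ) < (l : ℕ) :=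
        lt_of_le_of_ne hc (by simpa [Fin.ext_iff, eq_comm] using hl.1)
      have : (j : ℕ) < (l : ℕ) := by
        rcases lt_or_ge (j : ℕ) (l : ℕ) with h | h
        · exact h
        · exfalso; exact hl.2 (Fin.ext (by omega))
      rw [hb.1 l j this, mul_zero]

section Psi
variable (ψ₀ : F → ℂˣ) (hψadd : ∀ x y : F, ψ₀ (x + y) = ψ₀ x * ψ₀ y)

include hψadd

lemma psi_zero : ψ₀ 0 = 1 := by
  have := hψadd 0 0
  rw [add_zero] at this
  exact (mul_left_cancel (a := ψ₀ 0) (by rw [← this, mul_one])).symm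

lemma psiN_one : psiN ψ₀ (1 : Matrix (Fin n) (Fin n) F) = 1 := by
  unfold psiN
  have : (∑ i : Fin n, ∑ j : Fin n,
      if (j : ℕ) = (i : ℕ) + 1 then (1 : Matrix (Fin n) (Fin n) F) i j else 0) = 0 := by
    apply Finset.sum_eq_zero; intro i _
    apply Finset.sum_eq_zero; intro j _
    split
    · next h => exact Matrix.one_apply_ne (by intro hh; rw [hh] at h; omega)
    · rfl
  rw [this]; exact psi_zero ψ₀ hψadd

lemma psiN_mul (ha : IsUniUpper a) (hb : IsUniUpper b) :
    psiN ψ₀ (a * b) = psiN ψ₀ a * psiN ψ₀ b := by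
  unfold psiN
  rw [← hψadd]
  congr 1
  rw [← Finset.sum_add_distrib]
  apply Finset.sum_congr rfl
  intro i _
  rw [← Finset.sum_add_distrib]
  apply Finset.sum_congr rfl
  intro j _
  split
  · next h => exact mul_superdiag ha hb h
  · rw [add_zero]

lemma psiN_inv (h : IsUniUpper u) : psiN ψ₀ u⁻¹ = (psiN ψ₀ u)⁻¹ := by
  have := psiN_mul ψ₀ hψadd h h.inv
  rw [Matrix.mul_nonsing_inv u (by rw [h.det_eq_one]; exact isUnit_one),
    psiN_one ψ₀ hψadd] at this
  exact eq_inv_of_mul_eq_one_right (by rw [← this])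

lemma psiN_conj (hu : IsUniUpper u) (ha : IsUniUpper a) :
    psiN ψ₀ (u * a * u⁻¹) = psiN ψ₀ a := by
  rw [psiN_mul ψ₀ hψadd (hu.mul ha) hu.inv, psiN_mul ψ₀ hψadd hu ha,
    psiN_inv ψ₀ hψadd hu]
  rw [mul_comm (psiN ψ₀ u) (psiN ψ₀ a), mul_assoc, mul_inv_cancel, mul_one]

end Psi
end UniUpper

section Expand
variable {n : ℕ}

def expand (M : Matrix (Fin n) (Fin n) F) : Matrix (Fin (n + 1)) (Fin (n + 1)) F :=
  Matrix.of fun i j =>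
    Fin.cases (Fin.cases (1 : F) (fun _ => 0) j)
      (fun i' => Fin.cases 0 (fun j' => M i' j') j) i

@[simp] lemma expand_zero_zero (M : Matrix (Fin n) (Fin n) F) : expand M 0 0 = 1 := by
  simp [expand]
@[simp] lemma expand_zero_succ (M : Matrix (Fin n) (Fin n) F) (j : Fin n) :
    expand M 0 j.succ = 0 := by simp [expand]
@[simp] lemma expand_succ_zero (M : Matrix (Fin n) (Fin n) F) (i : Fin n) :
    expand M i.succ 0 = 0 := by simp [expand]
@[simp] lemma expand_succ_succ (M : Matrix (Fin n) (Fin n) F) (i j : Fin n) :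
    expand M i.succ j.succ = M i j := by simp [expand]

lemma expand_mul (M N : Matrix (Fin n) (Fin n) F) :
    expand (M * N) = expand M * expand N := by
  ext i j
  rw [Matrix.mul_apply, Fin.sum_univ_succ]
  induction i using Fin.cases with
  | zero =>
    induction j using Fin.cases with
    | zero => simp
    | succ j' => simp
  | succ i' =>
    induction j using Fin.cases with
    | zero => simp
    | succ j' => simp [Matrix.mul_apply]

lemma expand_blockTriangular {M : Matrix (Fin n) (Fin n) F} (h : M.BlockTriangular id) :
    (expand M).BlockTriangular id := by
  intro i j hij
  induction i using Fin.cases with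
  | zero => exact absurd hij (by simp)
  | succ i' =>
    induction j using Fin.cases with
    | zero => simp
    | succ j' =>
      rw [expand_succ_succ]
      exact h (by simpa [Fin.succ_lt_succ_iff] using hij)

lemma det_expand (M : Matrix (Fin n) (Fin n) F) : (expand M).det = M.det := by
  rw [Matrix.det_succ_row_zero, Fin.sum_univ_succ]
  have h0 : (expand M).submatrix Fin.succ Fin.succ = M := by
    ext a b
    simp [Matrix.submatrix_apply]
  simp [Fin.succAbove_zero, h0]

def extPerm (σ : Perm (Fin n)) : Perm (Fin (n + 1)) := Equiv.Perm.decomposeFin.symm (0, σ)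

@[simp] lemma extPerm_zero (σ : Perm (Fin n)) : extPerm σ 0 = 0 :=
  Equiv.Perm.decomposeFin_symm_apply_zero 0 σ

@[simp] lemma extPerm_succ (σ : Perm (Fin n)) (j : Fin n) : extPerm σ j.succ = (σ j).succ := by
  simp [extPerm, Equiv.Perm.decomposeFin_symm_apply_succ]

lemma expand_permMat (σ : Perm (Fin n)) :
    expand (permMat (F := F) σ) = permMat (extPerm σ) := by
  ext i j
  induction i using Fin.cases with
  | zero =>
    induction j using Fin.cases with
    | zero => simp [permMat]
    | succ j' => simp [permMat, Fin.succ_ne_zero (σ j')]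
  | succ i' =>
    induction j using Fin.cases with
    | zero => simp [permMat, (Fin.succ_ne_zero i').symm]
    | succ j' => simp [permMat, Fin.succ_inj]

lemma conj_expand_uniUpper (i : Fin (n + 1)) {u' : Matrix (Fin n) (Fin n) F}
    (h : IsUniUpper u') :
    IsUniUpper ((permMat (Fin.cycleRange i).symm * expand u' *
      permMat ((Fin.cycleRange i).symm)⁻¹ : Matrix (Fin (n + 1)) (Fin (n + 1)) F)) := by
  have hent : ∀ a b : Fin (n + 1),
      ((permMat (Fin.cycleRange i).symm * expand u' *
        permMat ((Fin.cycleRange i).symm)⁻¹ : Matrix (Fin (n + 1)) (Fin (n + 1)) F)) a b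
        = expand u' (Fin.cycleRange i a) (Fin.cycleRange i b) := by
    intro a b
    rw [mul_permMat_apply, permMat_mul_apply]
    rfl
  constructor
  · intro a b hab
    rw [hent]
    by_cases ha : a = i
    · subst ha
      have hbne : b ≠ a := by intro hE; rw [hE] at hab; omega
      obtain ⟨b', rfl⟩ := Fin.exists_succAbove_eq hbne
      rw [Fin.cycleRange_self, Fin.cycleRange_succAbove]
      simp
    · obtain ⟨a', rfl⟩ := Fin.exists_succAbove_eq ha
      by_cases hb : b = i
      · subst hb
        rw [Fin.cycleRange_self, Fin.cycleRange_succAbove]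
        simp
      · obtain ⟨b', rfl⟩ := Fin.exists_succAbove_eq hb
        rw [Fin.cycleRange_succAbove, Fin.cycleRange_succAbove, expand_succ_succ]
        apply h.1
        have : i.succAbove b' < i.succAbove a' := hab
        have := Fin.succAbove_lt_succAbove_iff.mp this
        exact this
  · intro a
    rw [hent]
    by_cases ha : a = i
    · subst ha
      rw [Fin.cycleRange_self]
      simp
    · obtain ⟨a', rfl⟩ := Fin.exists_succAbove_eq ha
      rw [Fin.cycleRange_succAbove, expand_succ_succ]
      exact h.2 a'

end Expand

theorem bruhat : ∀ {n : ℕ} (M : Matrix (Fin n) (Fin n) F), IsUnit M.det →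
    ∃ (u t : Matrix (Fin n) (Fin n) F) (σ : Perm (Fin n)),
      IsUniUpper u ∧ t.BlockTriangular id ∧ IsUnit t.det ∧ M = u * permMat σ * t := by
  intro n
  induction n with
  | zero =>
    intro M _
    refine ⟨1, 1, 1, isUniUpper_one, fun i j h => i.elim0, by simp, ?_⟩
    ext i j; exact i.elim0
  | succ n IH =>
    intro M hM
    classical
    -- pivot
    have hcol : ∃ r, M r 0 ≠ 0 := by
      by_contra hc
      push_neg at hc
      rw [Matrix.det_eq_zero_of_column_eq_zero 0 hc] at hM
      simpa using hM
    set s : Finset (Fin (n + 1)) := Finset.filter (fun r => M r 0 ≠ 0) Finset.univ with hs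
    have hsne : s.Nonempty := by
      obtain ⟨r, hr⟩ := hcol
      exact ⟨r, by simp [hs, hr]⟩
    set i : Fin (n + 1) := s.max' hsne with hidef
    have hi : M i 0 ≠ 0 := by
      have hmem : i ∈ s := s.max'_mem hsne
      rw [hs, Finset.mem_filter] at hmem
      exact hmem.2
    have hi2 : ∀ r, i < r → M r 0 = 0 := by
      intro r hr
      by_contra hr0
      have : r ∈ s := by simp [hs, hr0]
      exact absurd (Finset.le_max' s r this) (not_le.mpr hr)
    -- clear column below-to-above
    set A : Matrix (Fin (n + 1)) (Fin (n + 1)) F :=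
      Matrix.of fun r c => if c = i ∧ r < i then M r 0 / M i 0 else 0 with hA
    have hAentry : ∀ r c, A r c = if c = i ∧ r < i then M r 0 / M i 0 else 0 := fun r c => rfl
    have hAA : A * A = 0 := by
      ext r c
      rw [Matrix.mul_apply]
      apply Finset.sum_eq_zero
      intro l _
      by_cases hl : l = i
      · rw [hl]
        have h0 : A i c = 0 := by
          rw [hAentry]
          simp only [ite_eq_right_iff]
          rintro ⟨rfl, h⟩
          exact absurd h (lt_irrefl _)
        rw [h0, mul_zero]
      · have h0 : A r l = 0 := by rw [hAentry]; simp [hl]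
        rw [h0, zero_mul]
    have huv : (1 + A) * (1 - A) = 1 := by
      have h2 : (1 + A) * (1 - A) = 1 - A * A := by noncomm_ring
      rw [h2, hAA, sub_zero]
    have hvu : (1 - A) * (1 + A) = 1 := by
      have h2 : (1 - A) * (1 + A) = 1 - A * A := by noncomm_ring
      rw [h2, hAA, sub_zero]
    have hu₀ : IsUniUpper (1 + A) := by
      constructor
      · intro a b hab
        have hne : a ≠ b := by intro hE; subst hE; omega
        have hA0 : A a b = 0 := by
          rw [hAentry]
          simp only [ite_eq_right_iff]
          rintro ⟨rfl, hai⟩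
          exact absurd (lt_trans hab hai) (by omega)
        rw [Matrix.add_apply, Matrix.one_apply_ne hne, hA0, add_zero]
      · intro a
        have hA0 : A a a = 0 := by
          rw [hAentry]
          simp only [ite_eq_right_iff]
          rintro ⟨rfl, hai⟩
          exact absurd hai (lt_irrefl _)
        rw [Matrix.add_apply, Matrix.one_apply_eq, hA0, add_zero]
    set g' : Matrix (Fin (n + 1)) (Fin (n + 1)) F := (1 - A) * M with hg'
    have hMg' : M = (1 + A) * g' := by
      rw [hg', ← mul_assoc, huv, one_mul]
    have hAM : ∀ r, (A * M) r 0 = if r < i then M r 0 else 0 := by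
      intro r
      rw [Matrix.mul_apply, Finset.sum_eq_single i]
      · by_cases h : r < i
        · rw [hAentry, if_pos ⟨rfl, h⟩, if_pos h, div_mul_cancel₀ _ hi]
        · rw [hAentry, if_neg (by tauto), if_neg h, zero_mul]
      · intro l _ hl
        rw [hAentry, if_neg (by tauto), zero_mul]
      · simp
    have hg'0 : ∀ r, g' r 0 = if r = i then M i 0 else 0 := by
      intro r
      rw [hg', sub_mul, one_mul, Matrix.sub_apply, hAM]
      rcases lt_trichotomy r i with h | h | h
      · rw [if_pos h, if_neg (ne_of_lt h), sub_self]
      · subst h; rw [if_neg (lt_irrefl _), if_pos rfl, sub_zero]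
      · rw [if_neg (not_lt.mpr (le_of_lt h)), if_neg (ne_of_gt h), hi2 r h, sub_zero]
    -- row clearing via t₀
    set t₀ : Matrix (Fin (n + 1)) (Fin (n + 1)) F :=
      Matrix.of fun r c => if r = 0 then g' i c else if r = c then 1 else 0 with ht₀def
    have ht₀entry : ∀ r c, t₀ r c = if r = 0 then g' i c else if r = c then 1 else 0 :=
      fun r c => rfl
    have ht₀u : t₀.BlockTriangular id := by
      intro r c hrc
      have hr0 : r ≠ 0 := by
        intro hE
        rw [hE] at hrc
        exact absurd hrc (by simp)
      rw [ht₀entry, if_neg hr0, if_neg (by intro hE; rw [hE] at hrc; exact absurd hrc (lt_irrefl _))]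
    have hdet₀ : t₀.det = M i 0 := by
      rw [Matrix.det_of_upperTriangular ht₀u]
      rw [Finset.prod_eq_single 0]
      · rw [ht₀entry, if_pos rfl, hg'0, if_pos rfl]
      · intro b _ hb
        rw [ht₀entry, if_neg hb, if_pos rfl]
      · simp
    have htt : IsUnit t₀.det := by rw [hdet₀]; exact isUnit_iff_ne_zero.mpr hi
    set g'' : Matrix (Fin (n + 1)) (Fin (n + 1)) F := g' * t₀⁻¹ with hg''def
    have hg''t₀ : g'' * t₀ = g' := Matrix.nonsing_inv_mul_cancel_right t₀ g' htt
    have hrowi : ∀ c, g'' i c = if c = 0 then 1 else 0 := by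
      intro c
      rw [hg''def, Matrix.mul_apply]
      have hstep : ∀ l, g' i l * t₀⁻¹ l c = t₀ 0 l * t₀⁻¹ l c := by
        intro l
        rw [ht₀entry, if_pos rfl]
      rw [Finset.sum_congr rfl fun l _ => hstep l, ← Matrix.mul_apply,
        Matrix.mul_nonsing_inv t₀ htt]
      by_cases hc : c = 0
      · rw [hc]; simp
      · rw [if_neg hc, Matrix.one_apply_ne (by exact fun hE => hc hE.symm)]
    have hcol0 : ∀ r, g'' r 0 = if r = i then 1 else 0 := by
      intro r
      have h1 : (g'' * t₀) r 0 = g'' r 0 * M i 0 := by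
        rw [Matrix.mul_apply, Finset.sum_eq_single 0]
        · rw [ht₀entry, if_pos rfl, hg'0, if_pos rfl]
        · intro l _ hl
          rw [ht₀entry, if_neg hl, if_neg (by exact fun hE => hl hE), mul_zero]
        · simp
      rw [hg''t₀, hg'0] at h1
      by_cases hr : r = i
      · rw [if_pos hr]
        rw [if_pos hr] at h1
        field_simp at h1
        exact h1.symm
      · rw [if_neg hr]
        rw [if_neg hr] at h1
        rcases mul_eq_zero.mp h1.symm with h | h
        · exact h
        · exact absurd h hi
    set τ : Equiv.Perm (Fin (n + 1)) := (Fin.cycleRange i).symm with hτ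
    set h' : Matrix (Fin n) (Fin n) F :=
      Matrix.of fun a b => g'' (i.succAbove a) b.succ with hh'
    have hh'entry : ∀ a b, h' a b = g'' (i.succAbove a) b.succ := fun a b => rfl
    have hkey : g'' = permMat τ * expand h' := by
      ext r c
      rw [permMat_mul_apply, hτ, Equiv.symm_symm]
      by_cases hr : r = i
      · rw [hr, Fin.cycleRange_self]
        induction c using Fin.cases with
        | zero => rw [expand_zero_zero, hcol0, if_pos rfl]
        | succ c' => rw [expand_zero_succ, hrowi, if_neg (Fin.succ_ne_zero c')]
      · obtain ⟨r', rfl⟩ := Fin.exists_succAbove_eq hr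
        rw [Fin.cycleRange_succAbove]
        induction c using Fin.cases with
        | zero => rw [expand_succ_zero, hcol0, if_neg (Fin.succAbove_ne i r')]
        | succ c' => rw [expand_succ_succ, hh'entry]
    have hUg'' : IsUnit g'' := by
      rw [hg''def, hg']
      exact (((Matrix.isUnit_iff_isUnit_det _).2 (by
          rw [Matrix.det_mul]
          exact ((Matrix.isUnit_iff_isUnit_det _).1 ⟨⟨1 - A, 1 + A, hvu, huv⟩, rfl⟩).mul hM)).mul
        ⟨⟨t₀⁻¹, t₀, Matrix.nonsing_inv_mul t₀ htt, Matrix.mul_nonsing_inv t₀ htt⟩, rfl⟩)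
    have hexp : expand h' = permMat τ⁻¹ * g'' := by
      rw [hkey, ← mul_assoc, permMat_mul_permMat, inv_mul_cancel, permMat_one, one_mul]
    have hdeth' : IsUnit h'.det := by
      rw [← det_expand]
      exact (Matrix.isUnit_iff_isUnit_det _).1 (by rw [hexp]; exact (isUnit_permMat _).mul hUg'')
    obtain ⟨u', t', σ', hu', ht', htd', heq⟩ := IH h' hdeth'
    refine ⟨(1 + A) * (permMat τ * expand u' * permMat τ⁻¹), expand t' * t₀, τ * extPerm σ',
      hu₀.mul (conj_expand_uniUpper i hu'), (expand_blockTriangular ht').mul ht₀u, ?_, ?_⟩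
    · rw [Matrix.det_mul, det_expand]
      exact ((Matrix.isUnit_iff_isUnit_det _).1
        ((Matrix.isUnit_iff_isUnit_det _).2 htd')).mul htt
    · have hpe : expand (permMat (F := F) σ') = permMat (extPerm σ') := expand_permMat σ'
      have e1 : expand h' = expand u' * (permMat (extPerm σ') * expand t') := by
        rw [heq, expand_mul, expand_mul, hpe, mul_assoc]
      have hcanc : permMat (F := F) τ⁻¹ * permMat τ = 1 := by
        rw [permMat_mul_permMat, inv_mul_cancel, permMat_one]
      calc M = (1 + A) * g' := hMg'
        _ = (1 + A) * (g'' * t₀) := by rw [hg''t₀]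
        _ = (1 + A) * (permMat τ * (expand u' * (permMat (extPerm σ') * expand t')) * t₀) := by
            rw [hkey, e1]
        _ = (1 + A) * (permMat τ * expand u' * permMat τ⁻¹) * permMat (τ * extPerm σ') *
              (expand t' * t₀) := by
            rw [← permMat_mul_permMat τ (extPerm σ')]
            simp only [mul_assoc]
            rw [← mul_assoc (permMat (F := F) τ⁻¹), hcanc, one_mul]

section Blocks
variable {m k : ℕ}

/-- View an `(m+k) × (m+k)` matrix as a block matrix. -/
def sb (M : Matrix (Fin (m + k)) (Fin (m + k)) F) :
    Matrix (Fin m ⊕ Fin k) (Fin m ⊕ Fin k) F :=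
  M.submatrix finSumFinEquiv finSumFinEquiv

lemma sb_mul (M N : Matrix (Fin (m + k)) (Fin (m + k)) F) : sb (M * N) = sb M * sb N :=
  (Matrix.submatrix_mul_equiv M N _ _ _).symm

lemma sb_reindex (B : Matrix (Fin m ⊕ Fin k) (Fin m ⊕ Fin k) F) :
    sb ((Matrix.reindex finSumFinEquiv finSumFinEquiv) B) = B := by
  ext i j
  simp [sb]

lemma reindex_sb (M : Matrix (Fin (m + k)) (Fin (m + k)) F) :
    (Matrix.reindex finSumFinEquiv finSumFinEquiv) (sb M) = M := by
  ext i j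
  simp [sb]

lemma sb_det (M : Matrix (Fin (m + k)) (Fin (m + k)) F) : (sb M).det = M.det :=
  Matrix.det_submatrix_equiv_self _ M

lemma blocksOfUpper (t : Matrix (Fin (m + k)) (Fin (m + k)) F)
    (htl : ∀ (a : Fin k) (b : Fin m),
      t (finSumFinEquiv (Sum.inr a)) (finSumFinEquiv (Sum.inl b)) = 0)
    (htt : IsUnit t.det) :
    sb t = Matrix.fromBlocks (sb t).toBlocks₁₁ (sb t).toBlocks₁₂ 0 (sb t).toBlocks₂₂
      ∧ IsUnit (sb t).toBlocks₁₁.det ∧ IsUnit (sb t).toBlocks₂₂.det := by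
  have h21 : (sb t).toBlocks₂₁ = 0 := by
    ext a b
    exact htl a b
  have hfb : sb t = Matrix.fromBlocks (sb t).toBlocks₁₁ (sb t).toBlocks₁₂ 0 (sb t).toBlocks₂₂ := by
    conv_lhs => rw [← Matrix.fromBlocks_toBlocks (sb t)]
    rw [h21]
  have hdet : IsUnit ((sb t).toBlocks₁₁.det * (sb t).toBlocks₂₂.det) := by
    rw [← Matrix.det_fromBlocks_zero₂₁ (sb t).toBlocks₁₁ (sb t).toBlocks₁₂ (sb t).toBlocks₂₂,
      ← hfb, sb_det]
    exact htt
  exact ⟨hfb, isUnit_of_mul_isUnit_left hdet, isUnit_of_mul_isUnit_right hdet⟩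

lemma blockStep (t M₀ : Matrix (Fin (m + k)) (Fin (m + k)) F)
    (htl : ∀ (a : Fin k) (b : Fin m),
      t (finSumFinEquiv (Sum.inr a)) (finSumFinEquiv (Sum.inl b)) = 0)
    (htt : IsUnit t.det)
    (X₀ : Matrix (Fin m) (Fin k) F) (v₀ : Matrix (Fin k) (Fin k) F)
    (hM₀ : sb M₀ = Matrix.fromBlocks 1 X₀ 0 v₀) :
    ∃ X : Matrix (Fin m) (Fin k) F,
      sb (t⁻¹ * M₀ * t)
        = Matrix.fromBlocks 1 X 0 ((sb t).toBlocks₂₂⁻¹ * v₀ * (sb t).toBlocks₂₂) := by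
  obtain ⟨hfb, hA, hB⟩ := blocksOfUpper t htl htt
  set A := (sb t).toBlocks₁₁ with hAdef
  set Y := (sb t).toBlocks₁₂ with hYdef
  set B := (sb t).toBlocks₂₂ with hBdef
  set h' : Matrix (Fin k) (Fin k) F := B⁻¹ * v₀ * B with hh'
  set X : Matrix (Fin m) (Fin k) F := A⁻¹ * (Y + X₀ * B - Y * h') with hX
  have hL : sb (M₀ * t) = Matrix.fromBlocks A (Y + X₀ * B) 0 (v₀ * B) := by
    rw [sb_mul, hM₀, hfb, Matrix.fromBlocks_multiply]
    congr 1 <;> simp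
  have hR : sb t * Matrix.fromBlocks 1 X 0 h' = Matrix.fromBlocks A (Y + X₀ * B) 0 (v₀ * B) := by
    rw [hfb, Matrix.fromBlocks_multiply]
    have hAX : A * X = Y + X₀ * B - Y * h' := by
      rw [hX, Matrix.mul_nonsing_inv_cancel_left _ _ hA]
    have hBh : B * h' = v₀ * B := by
      rw [hh', ← mul_assoc, Matrix.mul_nonsing_inv_cancel_left _ _ hB]
    rw [hAX, hBh]
    congr 1 <;> simp
  have hMt : M₀ * t = t * (Matrix.reindex finSumFinEquiv finSumFinEquiv)
      (Matrix.fromBlocks 1 X 0 h') := by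
    have := hL.trans hR.symm
    have h2 := congrArg (Matrix.reindex finSumFinEquiv finSumFinEquiv) this
    rw [reindex_sb] at h2
    rw [h2]
    have h3 : sb (t * (Matrix.reindex finSumFinEquiv finSumFinEquiv)
        (Matrix.fromBlocks 1 X 0 h')) = sb t * Matrix.fromBlocks 1 X 0 h' := by
      rw [sb_mul, sb_reindex]
    have h4 := congrArg (Matrix.reindex finSumFinEquiv finSumFinEquiv) h3
    rw [reindex_sb] at h4
    rw [h4]
  refine ⟨X, ?_⟩
  rw [mul_assoc, hMt, Matrix.nonsing_inv_mul_cancel_left _ _ htt, sb_reindex]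

end Blocks

section Sdsum
variable {n : ℕ}

def sdsum (M : Matrix (Fin n) (Fin n) F) : F :=
  ∑ i : Fin n, ∑ j : Fin n, if (j : ℕ) = (i : ℕ) + 1 then M i j else 0

lemma psiN_eq (ψ₀ : F → ℂˣ) (M : Matrix (Fin n) (Fin n) F) : psiN ψ₀ M = ψ₀ (sdsum M) := rfl

lemma sdsum_inner (M : Matrix (Fin n) (Fin n) F) (i : Fin n) :
    (∑ j : Fin n, if (j : ℕ) = (i : ℕ) + 1 then M i j else 0)
      = if h : (i : ℕ) + 1 < n then M i ⟨(i : ℕ) + 1, h⟩ else 0 := by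
  split
  · next h =>
    rw [Finset.sum_eq_single (⟨(i : ℕ) + 1, h⟩ : Fin n)]
    · rw [if_pos rfl]
    · intro j _ hj
      rw [if_neg]
      intro hc
      exact hj (Fin.ext hc)
    · simp
  · next h =>
    apply Finset.sum_eq_zero
    intro j _
    rw [if_neg]
    intro hc
    exact h (hc ▸ j.isLt)

lemma sdsum_add (M N : Matrix (Fin n) (Fin n) F) : sdsum (M + N) = sdsum M + sdsum N := by
  unfold sdsum
  rw [← Finset.sum_add_distrib]
  apply Finset.sum_congr rfl
  intro i _
  rw [← Finset.sum_add_distrib]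
  apply Finset.sum_congr rfl
  intro j _
  split <;> simp

lemma sdsum_one : sdsum (1 : Matrix (Fin n) (Fin n) F) = 0 := by
  unfold sdsum
  apply Finset.sum_eq_zero; intro i _
  apply Finset.sum_eq_zero; intro j _
  split
  · next h => exact Matrix.one_apply_ne (by intro hc; rw [hc] at h; omega)
  · rfl

def Estd (p q : Fin n) (c : F) : Matrix (Fin n) (Fin n) F :=
  Matrix.of fun x y => if x = p ∧ y = q then c else 0

lemma Estd_apply (p q : Fin n) (c : F) (x y : Fin n) :
    Estd p q c x y = if x = p ∧ y = q then c else 0 := rfl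

lemma sdsum_Estd (p q : Fin n) (c : F) (hpq : (q : ℕ) = (p : ℕ) + 1) :
    sdsum (Estd p q c) = c := by
  unfold sdsum
  rw [Finset.sum_eq_single p]
  · rw [Finset.sum_eq_single q]
    · rw [if_pos hpq, Estd_apply, if_pos ⟨rfl, rfl⟩]
    · intro j _ hj
      split
      · rw [Estd_apply, if_neg (by tauto)]
      · rfl
    · simp
  · intro i _ hi
    apply Finset.sum_eq_zero
    intro j _
    split
    · rw [Estd_apply, if_neg (by tauto)]
    · rfl
  · simp

lemma isUniUpper_one_add_Estd (p q : Fin n) (c : F) (hpq : (p : ℕ) < (q : ℕ)) :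
    IsUniUpper (1 + Estd p q c) := by
  constructor
  · intro i j hij
    rw [Matrix.add_apply, Matrix.one_apply_ne (by intro hc; rw [hc] at hij; omega),
      Estd_apply, if_neg (by rintro ⟨rfl, rfl⟩; omega), add_zero]
  · intro i
    rw [Matrix.add_apply, Matrix.one_apply_eq, Estd_apply,
      if_neg (by rintro ⟨rfl, rfl⟩; omega), add_zero]

end Sdsum

section Embk
variable {m k : ℕ}

def embk (v : Matrix (Fin k) (Fin k) F) : Matrix (Fin (m + k)) (Fin (m + k)) F :=
  Matrix.of fun a b =>
    if h : (a : ℕ) < k ∧ (b : ℕ) < k then v ⟨a, h.1⟩ ⟨b, h.2⟩ else if a = b then 1 else 0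

lemma embk_apply (v : Matrix (Fin k) (Fin k) F) (a b : Fin (m + k)) :
    embk v a b
      = if h : (a : ℕ) < k ∧ (b : ℕ) < k then v ⟨a, h.1⟩ ⟨b, h.2⟩ else if a = b then 1 else 0 :=
  rfl

lemma isUniUpper_embk {v : Matrix (Fin k) (Fin k) F} (hv : IsUniUpper v) :
    IsUniUpper (embk v : Matrix (Fin (m + k)) (Fin (m + k)) F) := by
  constructor
  · intro a b hab
    rw [embk_apply]
    split
    · next h => exact hv.1 _ _ hab
    · rw [if_neg (by intro hc; rw [hc] at hab; omega)]
  · intro a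
    rw [embk_apply]
    split
    · next h => exact hv.2 _
    · rw [if_pos rfl]

lemma sdsum_embk (hm : 1 ≤ m) (v : Matrix (Fin k) (Fin k) F) :
    sdsum (embk v : Matrix (Fin (m + k)) (Fin (m + k)) F) = sdsum v := by
  unfold sdsum
  rw [Finset.sum_congr rfl fun i _ => sdsum_inner (embk v) i,
    Finset.sum_congr rfl fun i _ => sdsum_inner v i]
  rw [Fin.sum_univ_eq_sum_range
      (fun i => if h : i + 1 < m + k then
        (embk v : Matrix (Fin (m + k)) (Fin (m + k)) F) ⟨i, by omega⟩ ⟨i + 1, h⟩ else 0),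
    Fin.sum_univ_eq_sum_range
      (fun i => if h : i + 1 < k then v ⟨i, by omega⟩ ⟨i + 1, h⟩ else 0)]
  · rw [← Finset.sum_subset (Finset.range_subset_range.mpr (by omega : k ≤ m + k))]
    · apply Finset.sum_congr rfl
      intro i hi
      rw [Finset.mem_range] at hi
      by_cases h1 : i + 1 < k
      · rw [dif_pos h1, dif_pos (by omega), embk_apply, dif_pos ⟨by show i < k; omega, by show i + 1 < k; omega⟩]
      · rw [dif_neg h1, dif_pos (by omega), embk_apply,
          dif_neg (fun hc => h1 (show i + 1 < k from hc.2)),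
          if_neg (by simp only [Fin.ext_iff]; show ¬ i = i + 1; omega)]
    · intro i hi hni
      rw [Finset.mem_range] at hi
      rw [Finset.mem_range, not_lt] at hni
      split
      · next h =>
        rw [embk_apply, dif_neg (fun hc => absurd (show i < k from hc.1) (by omega)),
          if_neg (by simp only [Fin.ext_iff]; show ¬ i = i + 1; omega)]
      · rfl
end Embk

lemma sigma_structure {m k : ℕ} (hm : 1 ≤ m) (hk : 1 ≤ k) (σ : Equiv.Perm (Fin (m + k)))
    (hB : ∀ p q : Fin (m + k), (q : ℕ) = (p : ℕ) + 1 →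
      ((σ⁻¹ p : Fin (m + k)) : ℕ) < m → ((σ⁻¹ q : Fin (m + k)) : ℕ) < m) :
    ∀ j : Fin (m + k), ((σ⁻¹ j : Fin (m + k)) : ℕ) < m ↔ k ≤ (j : ℕ) := by
  classical
  have hmlt : m < m + k := by omega
  have hklt : k < m + k := by omega
  set T : Finset (Fin (m + k)) := Finset.filter (fun j => ((σ⁻¹ j : Fin (m + k)) : ℕ) < m)
    Finset.univ with hT
  have hcardT : T.card = m := by
    have himg : T = Finset.image σ (Finset.Iio (⟨m, hmlt⟩ : Fin (m + k))) := by
      ext j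
      simp only [hT, Finset.mem_filter, Finset.mem_univ, true_and, Finset.mem_image,
        Finset.mem_Iio]
      constructor
      · intro hj
        exact ⟨σ⁻¹ j, by rw [Fin.lt_def]; exact hj, by simp⟩
      · rintro ⟨a, ha, rfl⟩
        simpa using (Fin.lt_def.mp ha)
    rw [himg, Finset.card_image_of_injective _ σ.injective, Fin.card_Iio]
  have hstep : ∀ (d : ℕ) (j : Fin (m + k)), j ∈ T → ∀ h : (j : ℕ) + d < m + k,
      (⟨(j : ℕ) + d, h⟩ : Fin (m + k)) ∈ T := by
    intro d
    induction d with
    | zero => intro j hj h; simpa using hj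
    | succ d IH =>
      intro j hj h
      have h' : (j : ℕ) + d < m + k := by omega
      have hmemd := IH j hj h'
      rw [hT, Finset.mem_filter] at hmemd ⊢
      refine ⟨Finset.mem_univ _, ?_⟩
      exact hB ⟨(j : ℕ) + d, h'⟩ ⟨(j : ℕ) + d + 1, by omega⟩ rfl hmemd.2
  have hsub : T ⊆ Finset.Ici (⟨k, hklt⟩ : Fin (m + k)) := by
    intro j hj
    rw [Finset.mem_Ici]
    by_contra hlt
    have hjk : (j : ℕ) < k := by
      by_contra h2
      exact hlt (Fin.le_def.mpr (by simpa using not_lt.mp h2))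
    have hIci : Finset.Ici j ⊆ T := by
      intro l hl
      rw [Finset.mem_Ici, Fin.le_def] at hl
      have : l = ⟨(j : ℕ) + ((l : ℕ) - (j : ℕ)), by omega⟩ := by
        apply Fin.ext; simp; omega
      rw [this]
      exact hstep _ j hj _
    have hcard := Finset.card_le_card hIci
    rw [Fin.card_Ici, hcardT] at hcard
    omega
  have hEq : T = Finset.Ici (⟨k, hklt⟩ : Fin (m + k)) := by
    apply Finset.eq_of_subset_of_card_le hsub
    rw [Fin.card_Ici, hcardT]
    show m + k - k ≤ m
    omega
  intro j
  have : j ∈ T ↔ j ∈ Finset.Ici (⟨k, hklt⟩ : Fin (m + k)) := by rw [hEq]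
  simpa [hT, Finset.mem_filter, Fin.le_def] using this

section Glue
variable {m k : ℕ}

/-- Build a `GL` element from a matrix with unit determinant. -/
noncomputable def glOf {n : ℕ} (M : Matrix (Fin n) (Fin n) F) (h : IsUnit M.det) :
    GL (Fin n) F :=
  ⟨M, M⁻¹, Matrix.mul_nonsing_inv M h, Matrix.nonsing_inv_mul M h⟩

@[simp] lemma glOf_val {n : ℕ} (M : Matrix (Fin n) (Fin n) F) (h : IsUnit M.det) :
    (glOf M h).val = M := rfl

@[simp] lemma glOf_inv_val {n : ℕ} (M : Matrix (Fin n) (Fin n) F) (h : IsUnit M.det) :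
    ((glOf M h)⁻¹).val = M⁻¹ := rfl

lemma finish (ψ₀ : F → ℂˣ) (hψadd : ∀ x y : F, ψ₀ (x + y) = ψ₀ x * ψ₀ y)
    (H : Subgroup (GL (Fin k) F)) (g : GL (Fin (m + k)) F)
    (u₁ t : Matrix (Fin (m + k)) (Fin (m + k)) F) (σ : Equiv.Perm (Fin (m + k)))
    (hu₁ : IsUniUpper u₁) (htd : IsUnit t.det)
    (htl : ∀ (a : Fin k) (b : Fin m),
      t (finSumFinEquiv (Sum.inr a)) (finSumFinEquiv (Sum.inl b)) = 0)
    (hfact : g.val = u₁ * permMat σ * t)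
    (u' : Matrix (Fin (m + k)) (Fin (m + k)) F) (hu' : IsUniUpper u')
    (X₀ : Matrix (Fin m) (Fin k) F) (v₀ : Matrix (Fin k) (Fin k) F)
    (hM₀ : sb (permMat σ⁻¹ * u' * permMat σ) = Matrix.fromBlocks 1 X₀ 0 v₀)
    (h : GL (Fin k) F) (hmem : h ∈ H)
    (hhval : h.val = (sb t).toBlocks₂₂⁻¹ * v₀ * (sb t).toBlocks₂₂)
    (hpsi : ψ₀ (sdsum u') ≠ 1) :
    ∃ u : GL (Fin (m + k)) F, IsUniUpper u.val ∧
      (g⁻¹ * u * g) ∈ { g : GL (Fin (m + k)) F |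
        ∃ h : GL (Fin k) F, h ∈ H ∧ ∃ X : Matrix (Fin m) (Fin k) F,
          g.val = Matrix.reindex finSumFinEquiv finSumFinEquiv
            (Matrix.fromBlocks 1 X 0 h.val) } ∧ psiN ψ₀ u.val ≠ 1 := by
  have hu₁det : IsUnit u₁.det := by rw [hu₁.det_eq_one]; exact isUnit_one
  have hu'det : IsUnit u'.det := by rw [hu'.det_eq_one]; exact isUnit_one
  set U₁ : GL (Fin (m + k)) F := glOf u₁ hu₁det with hU₁
  set Uv : GL (Fin (m + k)) F := glOf u' hu'det with hUv
  set T : GL (Fin (m + k)) F := glOf t htd with hT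
  set Pσ : GL (Fin (m + k)) F :=
    ⟨permMat σ, permMat σ⁻¹, permMat_mul_permMat_inv σ, by
      rw [permMat_mul_permMat, inv_mul_cancel, permMat_one]⟩ with hPσ
  have hg : g = U₁ * Pσ * T := by
    apply Units.ext
    rw [hfact]
    rfl
  refine ⟨U₁ * Uv * U₁⁻¹, ?_, ?_, ?_⟩
  · show IsUniUpper (u₁ * u' * u₁⁻¹)
    exact (hu₁.mul hu').mul hu₁.inv
  · have hconj : g⁻¹ * (U₁ * Uv * U₁⁻¹) * g = T⁻¹ * (Pσ⁻¹ * Uv * Pσ) * T := by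
      rw [hg]
      group
    have hval : (g⁻¹ * (U₁ * Uv * U₁⁻¹) * g).val
        = t⁻¹ * (permMat σ⁻¹ * u' * permMat σ) * t := by
      rw [hconj]
      show t⁻¹ * (permMat σ⁻¹ * u' * permMat σ) * t =
        t⁻¹ * (permMat σ⁻¹ * u' * permMat σ) * t
      rfl
    obtain ⟨X, hX⟩ := blockStep t (permMat σ⁻¹ * u' * permMat σ) htl htd X₀ v₀ hM₀
    refine ⟨h, hmem, X, ?_⟩
    rw [hval, ← reindex_sb (t⁻¹ * (permMat σ⁻¹ * u' * permMat σ) * t), hX, hhval]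
  · show psiN ψ₀ (u₁ * u' * u₁⁻¹) ≠ 1
    rw [psiN_conj ψ₀ hψadd hu₁ hu', psiN_eq]
    exact hpsi

end Glue

/-- If `H ≤ GL_k(F)` is disjoint from `(U_k, ψ_k)`, then the subgroup
`H_m = { [[I_m, X], [0, h]] : h ∈ H, X ∈ M_{m×k}(F) }` of `GL_{m+k}(F)` is disjoint from
`(U_{m+k}, ψ_{m+k})`. -/
theorem stmt0 (ψ₀ : F → ℂˣ) (hψadd : ∀ x y : F, ψ₀ (x + y) = ψ₀ x * ψ₀ y)
    (hψnontriv : ∃ x : F, ψ₀ x ≠ 1) (m k : ℕ) (hm : 1 ≤ m) (hk : 1 ≤ k)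
    (H : Subgroup (GL (Fin k) F))
    (hH : DisjointFromWhittaker ψ₀ (H : Set (GL (Fin k) F))) :
    DisjointFromWhittaker ψ₀
      { g : GL (Fin (m + k)) F | ∃ h : GL (Fin k) F, h ∈ H ∧ ∃ X : Matrix (Fin m) (Fin k) F,
          g.val = Matrix.reindex finSumFinEquiv finSumFinEquiv
            (Matrix.fromBlocks 1 X 0 h.val) } := by
  classical
  intro g
  obtain ⟨u₁, t, σ, hu₁, ht, htd, hfact⟩ :=
    bruhat g.val ((Matrix.isUnit_iff_isUnit_det _).1 g.isUnit)
  have htl : ∀ (a : Fin k) (b : Fin m),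
      t (finSumFinEquiv (Sum.inr a)) (finSumFinEquiv (Sum.inl b)) = 0 := by
    intro a b
    apply ht
    show (finSumFinEquiv (Sum.inl b) : Fin (m + k)) < finSumFinEquiv (Sum.inr a)
    rw [Fin.lt_def]
    simp
    omega
  obtain ⟨-, -, hBunit⟩ := blocksOfUpper t htl htd
  by_cases hA : ∃ p q : Fin (m + k), (q : ℕ) = (p : ℕ) + 1 ∧
      ((σ⁻¹ p : Fin (m + k)) : ℕ) < m ∧ m ≤ ((σ⁻¹ q : Fin (m + k)) : ℕ)
  · -- Case A
    obtain ⟨p, q, hpq, hp, hq⟩ := hA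
    obtain ⟨c, hc⟩ := hψnontriv
    have hsigma : ∀ z : Fin (m + k), ∀ w, (σ z = w) ↔ (z = σ⁻¹ w) := by
      intro z w
      constructor
      · rintro rfl; simp
      · rintro rfl; simp
    have hM₀ : sb (permMat σ⁻¹ * (1 + Estd p q c) * permMat σ)
        = Matrix.fromBlocks 1
          (Matrix.of fun (a : Fin m) (b : Fin k) =>
            if (a : ℕ) = ((σ⁻¹ p : Fin (m + k)) : ℕ) ∧
              m + (b : ℕ) = ((σ⁻¹ q : Fin (m + k)) : ℕ) then c else 0) 0 1 := by
      ext x y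
      rw [sb, Matrix.submatrix_apply, conj_permMat_apply, Matrix.add_apply, Estd_apply]
      have h1 : (1 : Matrix (Fin (m + k)) (Fin (m + k)) F)
          (σ (finSumFinEquiv x)) (σ (finSumFinEquiv y))
          = if x = y then 1 else 0 := by
        by_cases hxy : x = y
        · rw [if_pos hxy, hxy, Matrix.one_apply_eq]
        · rw [if_neg hxy, Matrix.one_apply_ne]
          intro hcon
          exact hxy (finSumFinEquiv.injective (σ.injective hcon))
      rw [h1]
      rcases x with a | b <;> rcases y with a' | b'
      · have hE : (if σ (finSumFinEquiv (Sum.inl a)) = p ∧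
            σ (finSumFinEquiv (Sum.inl a')) = q then c else 0) = 0 := by
          rw [if_neg]
          rintro ⟨-, hcon⟩
          rw [hsigma] at hcon
          apply absurd hq
          rw [← hcon]
          simp only [finSumFinEquiv_apply_left, Fin.coe_castAdd, Fin.coe_castAdd, not_le]
          exact a'.isLt
        rw [hE, add_zero, Matrix.fromBlocks_apply₁₁]
        simp [Matrix.one_apply, Sum.inl.injEq]
      · rw [if_neg (by simp), zero_add, Matrix.fromBlocks_apply₁₂, Matrix.of_apply]
        refine if_congr ?_ rfl rfl
        rw [hsigma, hsigma]
        constructor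
        · rintro ⟨h1', h2'⟩
          rw [← h1', ← h2']
          simp
        · rintro ⟨h1', h2'⟩
          exact ⟨Fin.ext (by simpa using h1'), Fin.ext (by simpa using h2')⟩
      · have hE : (if σ (finSumFinEquiv (Sum.inr b)) = p ∧
            σ (finSumFinEquiv (Sum.inl a')) = q then c else 0) = 0 := by
          rw [if_neg]
          rintro ⟨hcon, -⟩
          rw [hsigma] at hcon
          apply absurd hp
          rw [← hcon]
          simp only [finSumFinEquiv_apply_right, Fin.coe_natAdd, Fin.coe_natAdd, not_lt]
          omega
        rw [if_neg (by simp), zero_add, hE, Matrix.fromBlocks_apply₂₁]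
        rfl
      · have hE : (if σ (finSumFinEquiv (Sum.inr b)) = p ∧
            σ (finSumFinEquiv (Sum.inr b')) = q then c else 0) = 0 := by
          rw [if_neg]
          rintro ⟨hcon, -⟩
          rw [hsigma] at hcon
          apply absurd hp
          rw [← hcon]
          simp only [finSumFinEquiv_apply_right, Fin.coe_natAdd, Fin.coe_natAdd, not_lt]
          omega
        rw [hE, add_zero, Matrix.fromBlocks_apply₂₂]
        simp [Matrix.one_apply, Sum.inr.injEq]
    refine finish ψ₀ hψadd H g u₁ t σ hu₁ htd htl hfact _
      (isUniUpper_one_add_Estd p q c (by omega)) _ _ hM₀ 1 H.one_mem ?_ ?_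
    · rw [Units.val_one, mul_one, Matrix.nonsing_inv_mul _ hBunit]
    · have : sdsum (1 + Estd p q c) = c := by
        rw [sdsum_add, sdsum_one, sdsum_Estd p q c hpq, zero_add]
      rw [this]
      exact hc
  · -- Case B
    push_neg at hA
    have hiff := sigma_structure hm hk σ (fun p q h1 h2 => by
      by_contra h3
      exact absurd (hA p q h1 h2) (by omega))
    have hout : ∀ a : Fin m, k ≤ ((σ (finSumFinEquiv (Sum.inl a))) : ℕ) := by
      intro a
      apply (hiff (σ (finSumFinEquiv (Sum.inl a)))).mp
      rw [← Equiv.Perm.mul_apply, inv_mul_cancel, Equiv.Perm.one_apply]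
      simp
    have hin : ∀ b : Fin k, ((σ (finSumFinEquiv (Sum.inr b))) : ℕ) < k := by
      intro b
      by_contra hcon
      have := (hiff (σ (finSumFinEquiv (Sum.inr b)))).mpr (by omega)
      rw [← Equiv.Perm.mul_apply, inv_mul_cancel, Equiv.Perm.one_apply] at this
      simp at this
    set βfun : Fin k → Fin k := fun b => ⟨(σ (finSumFinEquiv (Sum.inr b)) : ℕ), hin b⟩
      with hβfun
    have hβval : ∀ b, βfun b = ⟨(σ (finSumFinEquiv (Sum.inr b)) : ℕ), hin b⟩ :=
      fun b => by rw [hβfun]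
    have hβinj : Function.Injective βfun := by
      intro b b' hbb
      rw [hβval, hβval, Fin.mk.injEq] at hbb
      have : σ (finSumFinEquiv (Sum.inr b)) = σ (finSumFinEquiv (Sum.inr b')) := Fin.ext hbb
      simpa using finSumFinEquiv.injective (σ.injective this)
    set βp : Equiv.Perm (Fin k) := Equiv.ofBijective βfun
      ((Finite.injective_iff_bijective).1 hβinj) with hβp
    have hβap : ∀ b, βp b = βfun b := fun b => by rw [hβp]; rfl
    set PβGL : GL (Fin k) F :=
      ⟨permMat βp, permMat βp⁻¹, permMat_mul_permMat_inv βp, by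
        rw [permMat_mul_permMat, inv_mul_cancel, permMat_one]⟩ with hPβGL
    set BGL : GL (Fin k) F := glOf (sb t).toBlocks₂₂ hBunit with hBGL
    obtain ⟨v, hvU, hvmem, hvpsi⟩ := hH (PβGL * BGL)
    have hM₀ : sb (permMat σ⁻¹ * (embk v.val) * permMat σ)
        = Matrix.fromBlocks 1 0 0 (permMat βp⁻¹ * v.val * permMat βp) := by
      ext x y
      rw [sb, Matrix.submatrix_apply, conj_permMat_apply, embk_apply]
      rcases x with a | b <;> rcases y with a' | b'
      · rw [dif_neg (by rw [not_and]; intro hcon; exact absurd hcon (by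
          have := hout a; omega))]
        by_cases hxy : (Sum.inl a : Fin m ⊕ Fin k) = Sum.inl a'
        · rw [if_pos (by rw [hxy]), hxy]
          simp [Matrix.one_apply]
        · rw [if_neg, Matrix.fromBlocks_apply₁₁]
          · rw [Matrix.one_apply_ne (by simpa [Sum.inl.injEq] using hxy)]
          · intro hcon
            exact hxy (finSumFinEquiv.injective (σ.injective hcon))
      · rw [dif_neg (by rw [not_and]; intro hcon; exact absurd hcon (by
          have := hout a; omega)), if_neg (by
            intro hcon
            exact absurd (finSumFinEquiv.injective (σ.injective hcon)) (by simp))]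
        simp
      · rw [dif_neg (by
          rintro ⟨-, hcon⟩
          exact absurd hcon (by have := hout a'; omega)), if_neg (by
            intro hcon
            exact absurd (finSumFinEquiv.injective (σ.injective hcon)) (by simp))]
        simp
      · rw [dif_pos ⟨hin b, hin b'⟩, Matrix.fromBlocks_apply₂₂, conj_permMat_apply]
        rw [hβap, hβap, hβval, hβval]
    refine finish ψ₀ hψadd H g u₁ t σ hu₁ htd htl hfact _
      (isUniUpper_embk hvU) 0 _ hM₀ ((PβGL * BGL)⁻¹ * v * (PβGL * BGL)) hvmem ?_ ?_
    · show (((PβGL * BGL)⁻¹ * v * (PβGL * BGL)).val : Matrix (Fin k) (Fin k) F) = _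
      rw [Units.val_mul, Units.val_mul, Matrix.coe_units_inv, Units.val_mul]
      show (permMat βp * (sb t).toBlocks₂₂)⁻¹ * v.val * (permMat βp * (sb t).toBlocks₂₂) = _
      rw [Matrix.mul_inv_rev, permMat_inv]
      simp only [mul_assoc]
    · rw [sdsum_embk hm v.val]
      rw [psiN_eq] at hvpsi
      exact hvpsi

end Stmt0
end

section
/- Let F be a field, N = a + b with a, b ≥ 0, and α = (n_1,…,n_k) a composition of N. Let P = P_α ≤ GL_N(F) and let P₀^H ≤ GL_N(F) be the subgroup of block diagonal matrices diag(u_1, u_2) with u_1 ∈ GL_a(F) and u_2 ∈ GL_b(F) both upper triangular. Let ℱ^α_{a,b} be the set of subgroups of GL_N(F) of the form σ P σ⁻¹, where σ is an N×N permutation matrix, which contain P₀^H. Then the map T ↦ σ_T P σ_T⁻¹ is a bijection from 𝒯^α_{a,b} onto ℱ^α_{a,b}. -/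
open scoped MatrixGroups Matrix

namespace Stmt1

variable (F : Type*) [Field F]

/-- Extension of a tuple `n : Fin k → ℕ` by zero to all of `ℕ`. -/
def nExt {k : ℕ} (n : Fin k → ℕ) : ℕ → ℕ := fun i => if h : i < k then n ⟨i, h⟩ else 0

/-- Partial sums `ν_j = n 0 + ⋯ + n (j-1)`. -/
def psum {k : ℕ} (n : Fin k → ℕ) (j : ℕ) : ℕ := ∑ i ∈ Finset.range j, nExt n i

/-- Block index of a position `x` with respect to the composition `c` with `K` parts. -/
def blkIdxF (c : ℕ → ℕ) (K : ℕ) (x : ℕ) : ℕ :=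
  ((Finset.range K).filter (fun j => (∑ i ∈ Finset.range (j + 1), c i) ≤ x)).card

/-- The standard parabolic `P_n ≤ GL_M(F)` (as a set): invertible block upper triangular
matrices with diagonal blocks of sizes `n 0, …, n (k-1)`. -/
def PparGL (M : ℕ) {k : ℕ} (n : Fin k → ℕ) : Set (GL (Fin M) F) :=
  { g | ∀ i j : Fin M, blkIdxF (nExt n) k (j : ℕ) < blkIdxF (nExt n) k (i : ℕ) →
      g.val i j = 0 }

/-- Conjugation `σ S σ⁻¹` of a set of invertible matrices by the permutation matrix of `σ`;
recall `(σ p σ⁻¹) i j = p (σ⁻¹ i) (σ⁻¹ j)`. -/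
def conjPerm {M : ℕ} (σ : Equiv.Perm (Fin M)) (S : Set (GL (Fin M) F)) :
    Set (GL (Fin M) F) :=
  { g | ∃ p ∈ S, g.val = (p.val).submatrix σ.symm σ.symm }

/-- The group `P₀^H`: invertible matrices that are upper triangular and block diagonal with
respect to the decomposition `N = a + b`, i.e. `diag(u₁, u₂)` with `u₁ ∈ GL_a(F)`,
`u₂ ∈ GL_b(F)` upper triangular. -/
def P0HGL (M a : ℕ) : Set (GL (Fin M) F) :=
  { g | (∀ i j : Fin M, (j : ℕ) < (i : ℕ) → g.val i j = 0) ∧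
        (∀ i j : Fin M, (i : ℕ) < a → a ≤ (j : ℕ) → g.val i j = 0) }

/-- The number of complete pairs of intervals `I_1^A, I_1^B, …` lying entirely before `x`. -/
def blkPair {k : ℕ} (aT bT : Fin k → ℕ) (x : ℕ) : ℕ :=
  ((Finset.range k).filter (fun j => psum aT (j + 1) + psum bT (j + 1) ≤ x)).card

/-- Whether the position `x` lies in one of the intervals `I_j^B` of the table `(aT, bT)`. -/
def isBTab {k : ℕ} (aT bT : Fin k → ℕ) (x : ℕ) : Bool :=
  decide (psum aT (blkPair aT bT x + 1) + psum bT (blkPair aT bT x) ≤ x)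

/-- The permutation `σ_T` attached to a table `T = (aT, bT)`: the unique permutation that is
order preserving from `I_j^A` onto `A_j` and from `I_j^B` onto `B_j` for every `j`; it is the
inverse of the stable sorting permutation sorting positions according to whether they lie in
an `A`-interval or a `B`-interval. -/
noncomputable def sigmaTab (N : ℕ) {k : ℕ} (aT bT : Fin k → ℕ) : Equiv.Perm (Fin N) :=
  (Tuple.sort (fun x : Fin N => isBTab aT bT (x : ℕ)))⁻¹

section Comb

variable {k : ℕ} (m : Fin k → ℕ)

lemma psum_succ (j : ℕ) : psum m (j + 1) = psum m j + nExt m j :=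
  Finset.sum_range_succ _ _

lemma psum_mono : Monotone (psum m) := fun i j hij =>
  Finset.sum_le_sum_of_subset (Finset.range_subset_range.mpr hij)

lemma nExt_of_ge {j : ℕ} (hj : k ≤ j) : nExt m j = 0 := dif_neg (not_lt.mpr hj)

lemma nExt_lt {j : ℕ} (hj : j < k) : nExt m j = m ⟨j, hj⟩ := dif_pos hj

lemma psum_of_ge {j : ℕ} (hj : k ≤ j) : psum m j = psum m k := by
  unfold psum
  rw [← Finset.sum_subset (Finset.range_subset_range.mpr hj)]
  intro x hx hxk
  exact nExt_of_ge m (by simpa using hxk)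

lemma psum_k_eq_sum : psum m k = ∑ i, m i := by
  unfold psum
  rw [Finset.sum_range fun i => nExt m i]
  exact Finset.sum_congr rfl fun i _ => nExt_lt m i.2

lemma blkIdxF_eq_card (x : ℕ) :
    blkIdxF (nExt m) k x = ((Finset.range k).filter (fun j => psum m (j + 1) ≤ x)).card := rfl

/-- membership in a downward closed finite set of naturals -/
lemma mem_iff_lt_card_of_downset (S : Finset ℕ)
    (hd : ∀ i j : ℕ, i ≤ j → j ∈ S → i ∈ S) (j : ℕ) : j ∈ S ↔ j < S.card := by
  constructor
  · intro hj
    have hsub : Finset.range (j + 1) ⊆ S := fun i hi =>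
      hd i j (Nat.lt_succ_iff.mp (Finset.mem_range.mp hi)) hj
    have := Finset.card_le_card hsub
    simpa using lt_of_lt_of_le (Nat.lt_succ_self j) (by simpa using this)
  · intro hj
    by_contra hjS
    have hsub : S ⊆ Finset.range j := by
      intro e he
      rw [Finset.mem_range]
      by_contra hle
      exact hjS (hd j e (Nat.le_of_not_gt hle) he)
    have := Finset.card_le_card hsub
    simp only [Finset.card_range] at this
    omega

lemma lt_blkIdxF_iff {x : ℕ} (hx : x < psum m k) (j : ℕ) :
    j < blkIdxF (nExt m) k x ↔ psum m (j + 1) ≤ x := by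
  rw [blkIdxF_eq_card]
  set S := (Finset.range k).filter (fun j => psum m (j + 1) ≤ x) with hS
  have hd : ∀ i j : ℕ, i ≤ j → j ∈ S → i ∈ S := by
    intro i j hij hj
    simp only [hS, Finset.mem_filter, Finset.mem_range] at hj ⊢
    exact ⟨lt_of_le_of_lt hij hj.1, le_trans (psum_mono m (by omega)) hj.2⟩
  rw [← mem_iff_lt_card_of_downset S hd j]
  simp only [hS, Finset.mem_filter, Finset.mem_range]
  constructor
  · exact fun h => h.2
  · intro h
    refine ⟨?_, h⟩
    by_contra hk
    have : psum m (j + 1) = psum m k := psum_of_ge m (by omega)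
    omega

lemma blkIdxF_le_iff {x : ℕ} (hx : x < psum m k) (j : ℕ) :
    blkIdxF (nExt m) k x ≤ j ↔ x < psum m (j + 1) := by
  rw [← not_lt, lt_blkIdxF_iff m hx, not_le]

lemma blkIdxF_lt_k {x : ℕ} (hx : x < psum m k) : blkIdxF (nExt m) k x < k := by
  have hk : 0 < k := by
    by_contra h
    have hk0 : k = 0 := by omega
    subst hk0
    simp [psum] at hx
  have := (blkIdxF_le_iff m hx (k - 1)).mpr (by
    have : k - 1 + 1 = k := by omega
    rw [this]; exact hx)
  omega

lemma blkIdxF_eq_iff {x : ℕ} (hx : x < psum m k) (j : ℕ) :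
    blkIdxF (nExt m) k x = j ↔ psum m j ≤ x ∧ x < psum m (j + 1) := by
  constructor
  · intro h
    refine ⟨?_, (blkIdxF_le_iff m hx j).mp h.le⟩
    rcases Nat.eq_zero_or_pos j with rfl | hj
    · simp [psum]
    · have : ¬ (blkIdxF (nExt m) k x ≤ j - 1) := by omega
      rw [blkIdxF_le_iff m hx] at this
      have hj1 : j - 1 + 1 = j := by omega
      rw [hj1] at this
      omega
  · rintro ⟨h1, h2⟩
    have hle := (blkIdxF_le_iff m hx j).mpr h2
    rcases Nat.eq_zero_or_pos j with rfl | hj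
    · omega
    · have : ¬ (blkIdxF (nExt m) k x ≤ j - 1) := by
        rw [blkIdxF_le_iff m hx]
        have hj1 : j - 1 + 1 = j := by omega
        rw [hj1]
        omega
      omega

lemma blkIdxF_monotone : Monotone (blkIdxF (nExt m) k) := by
  intro x y hxy
  rw [blkIdxF_eq_card, blkIdxF_eq_card]
  apply Finset.card_le_card
  intro j hj
  simp only [Finset.mem_filter] at hj ⊢
  exact ⟨hj.1, le_trans hj.2 hxy⟩

lemma blkIdxF_fiber (j : ℕ) :
    (Finset.range (psum m k)).filter (fun x => blkIdxF (nExt m) k x = j) =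
      Finset.Ico (psum m j) (psum m (j + 1)) := by
  ext x
  simp only [Finset.mem_filter, Finset.mem_range, Finset.mem_Ico]
  constructor
  · rintro ⟨hx, hb⟩
    exact (blkIdxF_eq_iff m hx j).mp hb
  · rintro ⟨h1, h2⟩
    by_cases hj : j < k
    · have hx : x < psum m k := lt_of_lt_of_le h2 (psum_mono m (by omega))
      exact ⟨hx, (blkIdxF_eq_iff m hx j).mpr ⟨h1, h2⟩⟩
    · exfalso
      have e1 : psum m j = psum m k := psum_of_ge m (by omega)
      have e2 : psum m (j + 1) = psum m k := psum_of_ge m (by omega)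
      omega

lemma blkIdxF_fiber_card (j : ℕ) :
    ((Finset.range (psum m k)).filter (fun x => blkIdxF (nExt m) k x = j)).card = nExt m j := by
  rw [blkIdxF_fiber, Nat.card_Ico, psum_succ]
  omega

/-- Uniqueness: a function monotone on `[0, psum m k)` with fiber cardinalities `nExt m`
agrees with `blkIdxF (nExt m) k` there. -/
lemma eq_blkIdxF_of_mono_fibers (g : ℕ → ℕ)
    (hmono : ∀ x y, x ≤ y → y < psum m k → g x ≤ g y)
    (hfib : ∀ j, ((Finset.range (psum m k)).filter (fun x => g x = j)).card = nExt m j) :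
    ∀ x < psum m k, g x = blkIdxF (nExt m) k x := by
  have key : ∀ j, ∀ x < psum m k, (g x ≤ j ↔ x < psum m (j + 1)) := by
    intro j x hx
    set D := (Finset.range (psum m k)).filter (fun x => g x ≤ j) with hD
    have hd : ∀ i j' : ℕ, i ≤ j' → j' ∈ D → i ∈ D := by
      intro i j' hij hj'
      simp only [hD, Finset.mem_filter, Finset.mem_range] at hj' ⊢
      exact ⟨by omega, le_trans (hmono i j' hij hj'.1) hj'.2⟩
    have hcard : D.card = psum m (j + 1) := by
      have : D = (Finset.range (j + 1)).biUnion
          (fun i => (Finset.range (psum m k)).filter (fun x => g x = i)) := by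
        ext y
        simp only [hD, Finset.mem_filter, Finset.mem_range, Finset.mem_biUnion]
        constructor
        · rintro ⟨hy, hgy⟩
          exact ⟨g y, by omega, hy, rfl⟩
        · rintro ⟨i, hi, hy, hgy⟩
          exact ⟨hy, by omega⟩
      rw [this, Finset.card_biUnion]
      · simp only [hfib]
        exact rfl
      · intro i _ i' _ hii'
        apply Finset.disjoint_left.mpr
        intro y hy hy'
        simp only [Finset.mem_filter] at hy hy'
        exact hii' (hy.2 ▸ hy'.2 ▸ rfl)
    have := mem_iff_lt_card_of_downset D hd x
    rw [hcard] at this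
    rw [← this]
    simp only [hD, Finset.mem_filter, Finset.mem_range]
    tauto
  intro x hx
  have h1 : g x ≤ blkIdxF (nExt m) k x := by
    rw [key _ x hx]
    exact (blkIdxF_le_iff m hx _).mp le_rfl
  have h2 : blkIdxF (nExt m) k x ≤ g x := by
    rw [blkIdxF_le_iff m hx]
    exact (key _ x hx).mp le_rfl
  omega

end Comb

section Count

open Finset

/-- bridge: counting over `Fin N` equals counting over `range N`. -/
lemma card_filter_fin (N : ℕ) (p : ℕ → Prop) [DecidablePred p] :
    (Finset.univ.filter (fun x : Fin N => p x.val)).card = ((Finset.range N).filter p).card := by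
  rw [Finset.card_filter, Finset.card_filter]
  rw [← Fin.sum_univ_eq_sum_range (fun i => if p i then 1 else 0) N]

/-- membership in a downward closed subset of `Fin N`. -/
lemma fin_mem_iff_lt_card_of_downset {N : ℕ} (S : Finset (Fin N))
    (hd : ∀ x y : Fin N, x ≤ y → y ∈ S → x ∈ S) (x : Fin N) : x ∈ S ↔ x.val < S.card := by
  constructor
  · intro hx
    have hsub : Finset.Iic x ⊆ S := fun y hy => hd y x (Finset.mem_Iic.mp hy) hx
    have := Finset.card_le_card hsub
    rw [Fin.card_Iic] at this
    omega
  · intro hx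
    by_contra hxS
    have hsub : S ⊆ Finset.Iio x := by
      intro y hy
      rw [Finset.mem_Iio]
      by_contra hle
      exact hxS (hd x y (le_of_not_gt hle) hy)
    have := Finset.card_le_card hsub
    rw [Fin.card_Iio] at this
    omega

/-- counting a predicate transported along a permutation. -/
lemma card_filter_perm {N : ℕ} (s : Equiv.Perm (Fin N)) (p : Fin N → Prop) [DecidablePred p] :
    (Finset.univ.filter (fun x => p (s x))).card = (Finset.univ.filter p).card := by
  apply Finset.card_bij (fun x _ => s x)
  · intro x hx
    simp only [Finset.mem_filter, Finset.mem_univ, true_and] at hx ⊢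
    exact hx
  · intro x _ y _ h
    exact s.injective h
  · intro y hy
    simp only [Finset.mem_filter, Finset.mem_univ, true_and] at hy
    exact ⟨s.symm y, by simp [hy], by simp⟩

lemma card_filter_eq_sum_fibers {β : Type*} [Fintype β] (P : β → Prop) [DecidablePred P]
    (g : β → ℕ) (K : ℕ) (hg : ∀ x, P x → g x < K) :
    (Finset.univ.filter P).card
      = ∑ j ∈ Finset.range K, (Finset.univ.filter (fun x => P x ∧ g x = j)).card := by
  rw [Finset.card_eq_sum_card_fiberwise (f := g) (t := Finset.range K)
    (fun x hx => Finset.mem_range.mpr (hg x (Finset.mem_filter.mp hx).2))]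
  refine Finset.sum_congr rfl fun j _ => ?_
  rw [Finset.filter_filter]

/-- shifted counting: `t ↦ t + a` reindexing. -/
lemma card_filter_shift (b aa : ℕ) (Q : ℕ → Prop) [DecidablePred Q] :
    ((Finset.range b).filter (fun t => Q (t + aa))).card
      = ((Finset.range (aa + b)).filter (fun u => aa ≤ u ∧ Q u)).card := by
  apply Finset.card_bij (fun t _ => t + aa)
  · intro t ht
    simp only [Finset.mem_filter, Finset.mem_range] at ht ⊢
    exact ⟨by omega, by omega, ht.2⟩
  · intro t _ t' _ h
    omega
  · intro u hu
    simp only [Finset.mem_filter, Finset.mem_range] at hu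
    refine ⟨u - aa, ?_, by omega⟩
    simp only [Finset.mem_filter, Finset.mem_range]
    have huu : u - aa + aa = u := by omega
    rw [huu]
    exact ⟨by omega, hu.2.2⟩

lemma range_filter_restrict (aa N : ℕ) (haN : aa ≤ N) (Q : ℕ → Prop) [DecidablePred Q] :
    ((Finset.range N).filter (fun t => t < aa ∧ Q t)).card
      = ((Finset.range aa).filter Q).card := by
  congr 1
  ext t
  simp only [Finset.mem_filter, Finset.mem_range]
  constructor
  · rintro ⟨_, h1, h2⟩; exact ⟨h1, h2⟩
  · rintro ⟨h1, h2⟩; exact ⟨by omega, h1, h2⟩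

end Count
section Table

variable {k : ℕ} (n aT bT : Fin k → ℕ)

lemma nExt_add (hT : ∀ i, aT i + bT i = n i) (j : ℕ) :
    nExt aT j + nExt bT j = nExt n j := by
  unfold nExt
  by_cases h : j < k
  · simp only [dif_pos h]; exact hT _
  · simp only [dif_neg h]

lemma psum_add (hT : ∀ i, aT i + bT i = n i) (j : ℕ) :
    psum aT j + psum bT j = psum n j := by
  unfold psum
  rw [← Finset.sum_add_distrib]
  exact Finset.sum_congr rfl fun i _ => nExt_add n aT bT hT i

lemma blkPair_eq (hT : ∀ i, aT i + bT i = n i) (x : ℕ) :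
    blkPair aT bT x = blkIdxF (nExt n) k x := by
  unfold blkPair blkIdxF
  congr 1
  apply Finset.filter_congr
  intro j _
  have h1 := psum_add n aT bT hT (j + 1)
  show (psum aT (j + 1) + psum bT (j + 1) ≤ x) ↔ (psum n (j + 1) ≤ x)
  constructor <;> intro <;> omega

lemma isB_iff (hT : ∀ i, aT i + bT i = n i) (x : ℕ) :
    isBTab aT bT x = true ↔
      psum n (blkIdxF (nExt n) k x) + nExt aT (blkIdxF (nExt n) k x) ≤ x := by
  unfold isBTab
  rw [decide_eq_true_eq, blkPair_eq n aT bT hT]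
  set p := blkIdxF (nExt n) k x with hp
  rw [psum_succ]
  have h1 := psum_add n aT bT hT p
  constructor <;> intro <;> omega

lemma fiber_false (hT : ∀ i, aT i + bT i = n i) (j : ℕ) :
    ((Finset.range (psum n k)).filter
      (fun y => isBTab aT bT y = false ∧ blkIdxF (nExt n) k y = j)).card = nExt aT j := by
  by_cases hj : j < k
  · have hIco : ((Finset.range (psum n k)).filter
        (fun y => isBTab aT bT y = false ∧ blkIdxF (nExt n) k y = j))
        = Finset.Ico (psum n j) (psum n j + nExt aT j) := by
      ext y
      simp only [Finset.mem_filter, Finset.mem_range, Finset.mem_Ico]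
      constructor
      · rintro ⟨hy, hB, hblk⟩
        have h12 := (blkIdxF_eq_iff n hy j).mp hblk
        have hBle : ¬ (psum n j + nExt aT j ≤ y) := by
          intro hle
          have hBt := (isB_iff n aT bT hT y).mpr (by rw [hblk]; exact hle)
          rw [hBt] at hB
          simp at hB
        omega
      · rintro ⟨h1, h2⟩
        have haT : nExt aT j ≤ nExt n j := by have := nExt_add n aT bT hT j; omega
        have hstep : psum n j + nExt aT j ≤ psum n (j + 1) := by rw [psum_succ]; omega
        have hy : y < psum n k :=
          lt_of_lt_of_le (lt_of_lt_of_le h2 hstep) (psum_mono n hj)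
        have hblk : blkIdxF (nExt n) k y = j :=
          (blkIdxF_eq_iff n hy j).mpr ⟨h1, by omega⟩
        have hBf : isBTab aT bT y = false := by
          have hnt : ¬ (isBTab aT bT y = true) := by
            rw [isB_iff n aT bT hT, hblk]; omega
          simpa using hnt
        exact ⟨hy, hBf, hblk⟩
    rw [hIco, Nat.card_Ico]
    omega
  · rw [nExt_of_ge aT (le_of_not_gt hj)]
    rw [Finset.card_eq_zero, Finset.filter_eq_empty_iff]
    intro y hy
    rw [Finset.mem_range] at hy
    have := blkIdxF_lt_k n hy
    rintro ⟨_, hblk⟩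
    omega

lemma fiber_true (hT : ∀ i, aT i + bT i = n i) (j : ℕ) :
    ((Finset.range (psum n k)).filter
      (fun y => isBTab aT bT y = true ∧ blkIdxF (nExt n) k y = j)).card = nExt bT j := by
  by_cases hj : j < k
  · have hIco : ((Finset.range (psum n k)).filter
        (fun y => isBTab aT bT y = true ∧ blkIdxF (nExt n) k y = j))
        = Finset.Ico (psum n j + nExt aT j) (psum n (j + 1)) := by
      ext y
      simp only [Finset.mem_filter, Finset.mem_range, Finset.mem_Ico]
      constructor
      · rintro ⟨hy, hB, hblk⟩
        have h12 := (blkIdxF_eq_iff n hy j).mp hblk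
        have hBge := (isB_iff n aT bT hT y).mp hB
        rw [hblk] at hBge
        omega
      · rintro ⟨h1, h2⟩
        have haT : nExt aT j ≤ nExt n j := by have := nExt_add n aT bT hT j; omega
        have hy : y < psum n k := lt_of_lt_of_le h2 (psum_mono n hj)
        have hblk : blkIdxF (nExt n) k y = j :=
          (blkIdxF_eq_iff n hy j).mpr ⟨by omega, h2⟩
        have hBt : isBTab aT bT y = true := by
          rw [isB_iff n aT bT hT, hblk]; omega
        exact ⟨hy, hBt, hblk⟩
    rw [hIco, Nat.card_Ico, psum_succ]
    have := nExt_add n aT bT hT j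
    omega
  · rw [nExt_of_ge bT (le_of_not_gt hj)]
    rw [Finset.card_eq_zero, Finset.filter_eq_empty_iff]
    intro y hy
    rw [Finset.mem_range] at hy
    have := blkIdxF_lt_k n hy
    rintro ⟨_, hblk⟩
    omega

lemma count_split (P : ℕ → Prop) [DecidablePred P] :
    ((Finset.range (psum n k)).filter P).card
      = ∑ j ∈ Finset.range k,
          ((Finset.range (psum n k)).filter (fun y => P y ∧ blkIdxF (nExt n) k y = j)).card := by
  rw [Finset.card_eq_sum_card_fiberwise (f := blkIdxF (nExt n) k) (t := Finset.range k)
    (fun y hy => Finset.mem_range.mpr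
      (blkIdxF_lt_k n (Finset.mem_range.mp (Finset.mem_filter.mp hy).1)))]
  refine Finset.sum_congr rfl fun j _ => ?_
  rw [Finset.filter_filter]

lemma count_false (hT : ∀ i, aT i + bT i = n i) :
    ((Finset.range (psum n k)).filter (fun y => isBTab aT bT y = false)).card = psum aT k := by
  rw [count_split n (fun y => isBTab aT bT y = false)]
  unfold psum
  exact Finset.sum_congr rfl fun j _ => fiber_false n aT bT hT j

lemma count_true (hT : ∀ i, aT i + bT i = n i) :
    ((Finset.range (psum n k)).filter (fun y => isBTab aT bT y = true)).card = psum bT k := by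
  rw [count_split n (fun y => isBTab aT bT y = true)]
  unfold psum
  exact Finset.sum_congr rfl fun j _ => fiber_true n aT bT hT j

end Table

section SortPart

variable {N a b k : ℕ} {n aT bT : Fin k → ℕ}

lemma blk_sort (hab : a + b = N) (hT : ∀ i, aT i + bT i = n i)
    (ha : ∑ i, aT i = a) (hb : ∑ i, bT i = b) (hsum : ∑ i, n i = N) :
    ∀ x : Fin N,
      blkIdxF (nExt n) k ((Tuple.sort (fun y : Fin N => isBTab aT bT (y : ℕ)) x : Fin N) : ℕ)
        = if (x : ℕ) < a then blkIdxF (nExt aT) k (x : ℕ)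
          else blkIdxF (nExt bT) k ((x : ℕ) - a) := by
  set s := Tuple.sort (fun y : Fin N => isBTab aT bT (y : ℕ)) with hs
  obtain ⟨hmono, hstab⟩ := Tuple.eq_sort_iff.mp hs
  have hpn : psum n k = N := by rw [psum_k_eq_sum]; exact hsum
  have hpa : psum aT k = a := by rw [psum_k_eq_sum]; exact ha
  have hpb : psum bT k = b := by rw [psum_k_eq_sum]; exact hb
  have haN : a ≤ N := by omega
  -- position characterization
  have hpos : ∀ x : Fin N, (isBTab aT bT ((s x : Fin N) : ℕ) = false) ↔ (x : ℕ) < a := by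
    intro x
    set S := Finset.univ.filter
      (fun z : Fin N => isBTab aT bT ((s z : Fin N) : ℕ) = false) with hS
    have hd : ∀ u v : Fin N, u ≤ v → v ∈ S → u ∈ S := by
      intro u v huv hv
      simp only [hS, Finset.mem_filter, Finset.mem_univ, true_and] at hv ⊢
      have hle := hmono huv
      simp only [Function.comp] at hle
      rw [hv] at hle
      exact le_antisymm hle (Bool.false_le _)
    have hcard : S.card = a := by
      have e1 : S.card = (Finset.univ.filter
          (fun y : Fin N => isBTab aT bT (y : ℕ) = false)).card :=
        card_filter_perm s (fun y : Fin N => isBTab aT bT (y : ℕ) = false)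
      have e2 := card_filter_fin N (fun m => isBTab aT bT m = false)
      have e3 := count_false n aT bT hT
      rw [hpn] at e3
      rw [e1, e2, e3, hpa]
    have hmem := fin_mem_iff_lt_card_of_downset S hd x
    rw [hcard] at hmem
    rw [← hmem]
    simp [hS]
  have hposT : ∀ x : Fin N, (isBTab aT bT ((s x : Fin N) : ℕ) = true) ↔ a ≤ (x : ℕ) := by
    intro x
    rw [← not_lt, ← hpos x]
    cases isBTab aT bT ((s x : Fin N) : ℕ) <;> simp
  -- first half
  have hfst : ∀ t < psum aT k,
      (fun t => if h : t < N then blkIdxF (nExt n) k ((s ⟨t, h⟩ : Fin N) : ℕ) else 0) t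
        = blkIdxF (nExt aT) k t := by
    apply eq_blkIdxF_of_mono_fibers
    · intro x y hxy hy
      rw [hpa] at hy
      have hxN : x < N := by omega
      have hyN : y < N := by omega
      simp only [dif_pos hxN, dif_pos hyN]
      rcases eq_or_lt_of_le hxy with rfl | hlt
      · exact le_rfl
      · have hBx : isBTab aT bT ((s ⟨x, hxN⟩ : Fin N) : ℕ) = false := (hpos _).mpr (by
          show x < a
          omega)
        have hBy : isBTab aT bT ((s ⟨y, hyN⟩ : Fin N) : ℕ) = false := (hpos _).mpr (by
          show y < a
          omega)
        have hlt' : s ⟨x, hxN⟩ < s ⟨y, hyN⟩ := by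
          apply hstab
          · exact Fin.mk_lt_mk.mpr hlt
          · rw [hBx, hBy]
        exact blkIdxF_monotone n (le_of_lt hlt')
    · intro j
      rw [hpa]
      rw [← range_filter_restrict a N haN]
      rw [← card_filter_fin N (fun t => t < a ∧
        (fun t => if h : t < N then blkIdxF (nExt n) k ((s ⟨t, h⟩ : Fin N) : ℕ) else 0) t = j)]
      have hsame : Finset.univ.filter (fun x : Fin N => (x : ℕ) < a ∧
            (if h : (x : ℕ) < N then blkIdxF (nExt n) k ((s ⟨(x : ℕ), h⟩ : Fin N) : ℕ) else 0) = j)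
          = Finset.univ.filter (fun x : Fin N =>
              isBTab aT bT ((s x : Fin N) : ℕ) = false
                ∧ blkIdxF (nExt n) k ((s x : Fin N) : ℕ) = j) := by
        ext x
        simp only [Finset.mem_filter, Finset.mem_univ, true_and, dif_pos x.isLt, Fin.eta]
        rw [hpos x]
      rw [hsame]
      have e1 : (Finset.univ.filter (fun x : Fin N =>
            isBTab aT bT ((s x : Fin N) : ℕ) = false
              ∧ blkIdxF (nExt n) k ((s x : Fin N) : ℕ) = j)).card
          = (Finset.univ.filter (fun y : Fin N =>
              isBTab aT bT (y : ℕ) = false ∧ blkIdxF (nExt n) k (y : ℕ) = j)).card :=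
        card_filter_perm s
          (fun y : Fin N => isBTab aT bT (y : ℕ) = false ∧ blkIdxF (nExt n) k (y : ℕ) = j)
      rw [e1, card_filter_fin N (fun m => isBTab aT bT m = false ∧ blkIdxF (nExt n) k m = j)]
      have hf := fiber_false n aT bT hT j
      rw [hpn] at hf
      exact hf
  -- second half
  have hsnd : ∀ t < psum bT k,
      (fun t => if h : t + a < N then blkIdxF (nExt n) k ((s ⟨t + a, h⟩ : Fin N) : ℕ) else 0) t
        = blkIdxF (nExt bT) k t := by
    apply eq_blkIdxF_of_mono_fibers
    · intro x y hxy hy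
      rw [hpb] at hy
      have hxN : x + a < N := by omega
      have hyN : y + a < N := by omega
      simp only [dif_pos hxN, dif_pos hyN]
      rcases eq_or_lt_of_le hxy with rfl | hlt
      · exact le_rfl
      · have hBx : isBTab aT bT ((s ⟨x + a, hxN⟩ : Fin N) : ℕ) = true := (hposT _).mpr (by
          simp only []
          omega)
        have hBy : isBTab aT bT ((s ⟨y + a, hyN⟩ : Fin N) : ℕ) = true := (hposT _).mpr (by
          simp only []
          omega)
        have hlt' : s ⟨x + a, hxN⟩ < s ⟨y + a, hyN⟩ := by
          apply hstab
          · exact Fin.mk_lt_mk.mpr (by omega)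
          · rw [hBx, hBy]
        exact blkIdxF_monotone n (le_of_lt hlt')
    · intro j
      rw [hpb]
      have hshift := card_filter_shift b a
        (fun u => (if h : u < N then blkIdxF (nExt n) k ((s ⟨u, h⟩ : Fin N) : ℕ) else 0) = j)
      rw [hab] at hshift
      rw [hshift]
      rw [← card_filter_fin N (fun u => a ≤ u ∧
        (if h : u < N then blkIdxF (nExt n) k ((s ⟨u, h⟩ : Fin N) : ℕ) else 0) = j)]
      have hsame : Finset.univ.filter (fun x : Fin N => a ≤ (x : ℕ) ∧
            (if h : (x : ℕ) < N then blkIdxF (nExt n) k ((s ⟨(x : ℕ), h⟩ : Fin N) : ℕ) else 0) = j)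
          = Finset.univ.filter (fun x : Fin N =>
              isBTab aT bT ((s x : Fin N) : ℕ) = true
                ∧ blkIdxF (nExt n) k ((s x : Fin N) : ℕ) = j) := by
        ext x
        simp only [Finset.mem_filter, Finset.mem_univ, true_and, dif_pos x.isLt, Fin.eta]
        rw [hposT x]
      rw [hsame]
      have e1 : (Finset.univ.filter (fun x : Fin N =>
            isBTab aT bT ((s x : Fin N) : ℕ) = true
              ∧ blkIdxF (nExt n) k ((s x : Fin N) : ℕ) = j)).card
          = (Finset.univ.filter (fun y : Fin N =>
              isBTab aT bT (y : ℕ) = true ∧ blkIdxF (nExt n) k (y : ℕ) = j)).card :=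
        card_filter_perm s
          (fun y : Fin N => isBTab aT bT (y : ℕ) = true ∧ blkIdxF (nExt n) k (y : ℕ) = j)
      rw [e1, card_filter_fin N (fun m => isBTab aT bT m = true ∧ blkIdxF (nExt n) k m = j)]
      have hf := fiber_true n aT bT hT j
      rw [hpn] at hf
      exact hf
  -- combine
  intro x
  by_cases hx : (x : ℕ) < a
  · rw [if_pos hx]
    have h2 := hfst (x : ℕ) (by rw [hpa]; exact hx)
    simp only [dif_pos x.isLt, Fin.eta] at h2
    exact h2
  · rw [if_neg hx]
    push_neg at hx
    have hbN : (x : ℕ) - a < psum bT k := by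
      rw [hpb]
      have := x.isLt
      omega
    have h2 := hsnd ((x : ℕ) - a) hbN
    have hcond : (x : ℕ) - a + a < N := by have := x.isLt; omega
    simp only [dif_pos hcond] at h2
    have hxeq : (⟨(x : ℕ) - a + a, hcond⟩ : Fin N) = x := by
      apply Fin.ext
      show (x : ℕ) - a + a = (x : ℕ)
      omega
    rw [hxeq] at h2
    exact h2

end SortPart

section Mat

variable {M0 : ℕ}
/-- set of invertible matrices with zero pattern prescribed by `f`. -/
def patSet (M : ℕ) (f : Fin M → ℕ) : Set (GL (Fin M) F) :=
  { g | ∀ i j : Fin M, f j < f i → g.val i j = 0 }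

lemma PparGL_eq_patSet (M : ℕ) {k : ℕ} (n : Fin k → ℕ) :
    PparGL F M n = patSet F M (fun x => blkIdxF (nExt n) k x.val) := rfl

lemma conjPerm_patSet {M : ℕ} (σ : Equiv.Perm (Fin M)) (f : Fin M → ℕ) :
    conjPerm F σ (patSet F M f) = patSet F M (fun x => f (σ.symm x)) := by
  ext g
  constructor
  · rintro ⟨p, hp, hg⟩ i j hij
    rw [hg]
    exact hp _ _ hij
  · intro hg
    refine ⟨⟨g.val.submatrix σ σ, (g⁻¹).val.submatrix σ σ, ?_, ?_⟩, ?_, ?_⟩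
    · rw [Matrix.submatrix_mul_equiv]
      have : g.val * (g⁻¹).val = 1 := g.mul_inv
      rw [this, Matrix.submatrix_one_equiv]
    · rw [Matrix.submatrix_mul_equiv]
      have : (g⁻¹).val * g.val = 1 := g.inv_mul
      rw [this, Matrix.submatrix_one_equiv]
    · intro i j hij
      have := hg (σ i) (σ j)
      simp only [Equiv.symm_apply_apply] at this
      exact this hij
    · show g.val = (g.val.submatrix σ σ).submatrix σ.symm σ.symm
      rw [Matrix.submatrix_submatrix]
      have h1 : (⇑σ ∘ ⇑σ.symm) = id := by
        funext x; simp
      rw [h1, Matrix.submatrix_id_id]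

variable {M : ℕ}

/-- the transvection `1 + E_{i j}` as an element of `GL`. -/
noncomputable def tUnit (i j : Fin M) (hij : i ≠ j) : GL (Fin M) F :=
  ⟨Matrix.transvection i j (1 : F), Matrix.transvection i j (-1 : F),
    by simpa using Matrix.transvection_mul_transvection_same i j hij (1 : F) (-1),
    by simpa using Matrix.transvection_mul_transvection_same i j hij (-1 : F) 1⟩

lemma tUnit_apply (i j i' j' : Fin M) (hij : i ≠ j) :
    (tUnit F i j hij).val i' j' =
      (if i' = j' then (1 : F) else 0) + (if i = i' ∧ j = j' then 1 else 0) := by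
  show (Matrix.transvection i j (1 : F)) i' j' = _
  simp only [Matrix.transvection, Matrix.add_apply, Matrix.one_apply]
  congr 1

lemma tUnit_mem_patSet {f : Fin M → ℕ} {i j : Fin M} (hij : i ≠ j) (h : f i ≤ f j) :
    tUnit F i j hij ∈ patSet F M f := by
  intro i' j' hlt
  rw [tUnit_apply]
  have h1 : i' ≠ j' := by rintro rfl; omega
  rw [if_neg h1, if_neg ?_, add_zero]
  rintro ⟨rfl, rfl⟩
  omega

lemma le_of_tUnit_mem_patSet {f : Fin M → ℕ} {i j : Fin M} (hij : i ≠ j)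
    (h : tUnit F i j hij ∈ patSet F M f) : f i ≤ f j := by
  by_contra hlt
  have := h i j (by omega)
  rw [tUnit_apply, if_neg hij, if_pos ⟨rfl, rfl⟩, zero_add] at this
  exact one_ne_zero this

lemma tUnit_mem_P0H {a : ℕ} {i j : Fin M} (hij : (i : ℕ) < (j : ℕ))
    (hhalf : (j : ℕ) < a ∨ a ≤ (i : ℕ)) :
    tUnit F i j (by intro h; rw [h] at hij; omega) ∈ P0HGL F M a := by
  constructor
  · intro i' j' hlt
    rw [tUnit_apply]
    have h1 : i' ≠ j' := by rintro rfl; omega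
    rw [if_neg h1, if_neg ?_, add_zero]
    rintro ⟨rfl, rfl⟩
    omega
  · intro i' j' h1 h2
    rw [tUnit_apply]
    have hne : i' ≠ j' := by rintro rfl; omega
    rw [if_neg hne, if_neg ?_, add_zero]
    rintro ⟨rfl, rfl⟩
    omega

/-- `P₀^H ⊆ patSet f` iff `f` is monotone on each half. -/
lemma P0H_subset_patSet_iff (a : ℕ) (f : Fin M → ℕ) :
    P0HGL F M a ⊆ patSet F M f ↔
      ∀ x y : Fin M, (x : ℕ) ≤ (y : ℕ) → ((y : ℕ) < a ∨ a ≤ (x : ℕ)) → f x ≤ f y := by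
  constructor
  · intro hsub x y hxy hhalf
    rcases eq_or_lt_of_le hxy with heq | hlt
    · have : x = y := Fin.ext heq
      rw [this]
    · have hne : x ≠ y := by intro h; rw [h] at hlt; omega
      exact le_of_tUnit_mem_patSet F hne (hsub (tUnit_mem_P0H F hlt hhalf))
  · intro hmono g hg i j hlt
    by_cases hij : (j : ℕ) < (i : ℕ)
    · exact hg.1 i j hij
    · push_neg at hij
      by_cases hhalf : (j : ℕ) < a ∨ a ≤ (i : ℕ)
      · exact absurd (hmono i j hij hhalf) (by omega)
      · push_neg at hhalf
        exact hg.2 i j hhalf.2 hhalf.1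


end Mat

section Main

variable {N a b k : ℕ}

def gTab (a : ℕ) {k : ℕ} (aT bT : Fin k → ℕ) : ℕ → ℕ :=
  fun m => if m < a then blkIdxF (nExt aT) k m else blkIdxF (nExt bT) k (m - a)

def fTab (N a : ℕ) {k : ℕ} (aT bT : Fin k → ℕ) : Fin N → ℕ :=
  fun x => gTab a aT bT (x : ℕ)

lemma fTab_lt_k {aT bT : Fin k → ℕ} (hab : a + b = N)
    (ha : ∑ i, aT i = a) (hb : ∑ i, bT i = b) :
    ∀ x : Fin N, fTab N a aT bT x < k := by
  intro x
  have hpa : psum aT k = a := by rw [psum_k_eq_sum]; exact ha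
  have hpb : psum bT k = b := by rw [psum_k_eq_sum]; exact hb
  unfold fTab gTab
  by_cases hx : (x : ℕ) < a
  · rw [if_pos hx]
    exact blkIdxF_lt_k aT (by rw [hpa]; exact hx)
  · rw [if_neg hx]
    exact blkIdxF_lt_k bT (by rw [hpb]; have := x.isLt; omega)

lemma fTab_mono_half {aT bT : Fin k → ℕ} :
    ∀ x y : Fin N, (x : ℕ) ≤ (y : ℕ) → ((y : ℕ) < a ∨ a ≤ (x : ℕ)) →
      fTab N a aT bT x ≤ fTab N a aT bT y := by
  intro x y hxy hh
  unfold fTab gTab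
  rcases hh with h | h
  · rw [if_pos (lt_of_le_of_lt hxy h), if_pos h]
    exact blkIdxF_monotone aT hxy
  · rw [if_neg (by omega), if_neg (by omega)]
    exact blkIdxF_monotone bT (by omega)

lemma fTab_fiber_A {aT bT : Fin k → ℕ} (hab : a + b = N) (ha : ∑ i, aT i = a) (j : ℕ) :
    (Finset.univ.filter (fun x : Fin N => (x : ℕ) < a ∧ fTab N a aT bT x = j)).card
      = nExt aT j := by
  have hpa : psum aT k = a := by rw [psum_k_eq_sum]; exact ha
  unfold fTab
  rw [card_filter_fin N (fun m => m < a ∧ gTab a aT bT m = j)]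
  rw [range_filter_restrict a N (by omega) (fun m => gTab a aT bT m = j)]
  have he : (Finset.range a).filter (fun m => gTab a aT bT m = j)
      = (Finset.range a).filter (fun m => blkIdxF (nExt aT) k m = j) := by
    apply Finset.filter_congr
    intro m hm
    rw [Finset.mem_range] at hm
    unfold gTab
    rw [if_pos hm]
  rw [he, ← hpa]
  exact blkIdxF_fiber_card aT j

lemma fTab_fiber_B {aT bT : Fin k → ℕ} (hab : a + b = N) (hb : ∑ i, bT i = b) (j : ℕ) :
    (Finset.univ.filter (fun x : Fin N => a ≤ (x : ℕ) ∧ fTab N a aT bT x = j)).card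
      = nExt bT j := by
  have hpb : psum bT k = b := by rw [psum_k_eq_sum]; exact hb
  unfold fTab
  rw [card_filter_fin N (fun m => a ≤ m ∧ gTab a aT bT m = j)]
  have hsh := card_filter_shift b a (fun m => gTab a aT bT m = j)
  rw [hab] at hsh
  rw [← hsh]
  have he : (Finset.range b).filter (fun t => gTab a aT bT (t + a) = j)
      = (Finset.range b).filter (fun t => blkIdxF (nExt bT) k t = j) := by
    apply Finset.filter_congr
    intro m _
    unfold gTab
    rw [if_neg (by omega), Nat.add_sub_cancel]
  rw [he, ← hpb]
  exact blkIdxF_fiber_card bT j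

lemma fTab_fiber {n aT bT : Fin k → ℕ} (hab : a + b = N) (hT : ∀ i, aT i + bT i = n i)
    (ha : ∑ i, aT i = a) (hb : ∑ i, bT i = b) (j : ℕ) :
    (Finset.univ.filter (fun x : Fin N => fTab N a aT bT x = j)).card = nExt n j := by
  have e1 : (Finset.univ.filter (fun x : Fin N => fTab N a aT bT x = j)).filter
        (fun x : Fin N => (x : ℕ) < a)
      = Finset.univ.filter (fun x : Fin N => (x : ℕ) < a ∧ fTab N a aT bT x = j) := by
    ext x
    simp only [Finset.mem_filter, Finset.mem_univ, true_and]
    tauto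
  have e2 : (Finset.univ.filter (fun x : Fin N => fTab N a aT bT x = j)).filter
        (fun x : Fin N => ¬ (x : ℕ) < a)
      = Finset.univ.filter (fun x : Fin N => a ≤ (x : ℕ) ∧ fTab N a aT bT x = j) := by
    ext x
    simp only [Finset.mem_filter, Finset.mem_univ, true_and, not_lt]
    tauto
  rw [← Finset.card_filter_add_card_filter_not (p := fun x : Fin N => (x : ℕ) < a),
    e1, e2, fTab_fiber_A hab ha j, fTab_fiber_B hab hb j, nExt_add n aT bT hT j]

lemma psum_lt_psum {n : Fin k → ℕ} (hn : ∀ i, 0 < n i) {i j : ℕ} (hij : i < j) (hjk : j ≤ k) :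
    psum n i < psum n j := by
  have hik : i < k := by omega
  have h1 : psum n i < psum n (i + 1) := by
    rw [psum_succ, nExt_lt n hik]
    have := hn ⟨i, hik⟩
    omega
  exact lt_of_lt_of_le h1 (psum_mono n (by omega))

lemma card_lt_set {N' : ℕ} (f : Fin N' → ℕ) (n : Fin k → ℕ)
    (hfib : ∀ j : ℕ, (Finset.univ.filter (fun y : Fin N' => f y = j)).card = nExt n j)
    (m : ℕ) :
    (Finset.univ.filter (fun y : Fin N' => f y < m)).card = psum n m := by
  rw [Finset.card_eq_sum_card_fiberwise (f := f) (t := Finset.range m)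
    (fun y hy => Finset.mem_range.mpr (Finset.mem_filter.mp hy).2)]
  unfold psum
  refine Finset.sum_congr rfl fun j hj => ?_
  rw [Finset.filter_filter, ← hfib j]
  congr 1
  apply Finset.filter_congr
  intro y _
  rw [Finset.mem_range] at hj
  constructor
  · exact fun h => h.2
  · exact fun h => ⟨by omega, h⟩


lemma table_inj {n aT bT aT' bT' : Fin k → ℕ} (hab : a + b = N) (hn : ∀ i, 0 < n i)
    (hT : ∀ i, aT i + bT i = n i) (ha : ∑ i, aT i = a) (hb : ∑ i, bT i = b)
    (hT' : ∀ i, aT' i + bT' i = n i) (ha' : ∑ i, aT' i = a) (hb' : ∑ i, bT' i = b)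
    (hiff : ∀ x y : Fin N, (fTab N a aT bT x ≤ fTab N a aT bT y ↔
      fTab N a aT' bT' x ≤ fTab N a aT' bT' y)) :
    aT = aT' ∧ bT = bT' := by
  have hfeq : ∀ x : Fin N, fTab N a aT bT x = fTab N a aT' bT' x := by
    intro x
    have hset : Finset.univ.filter (fun y : Fin N => fTab N a aT bT y < fTab N a aT bT x)
        = Finset.univ.filter (fun y : Fin N => fTab N a aT' bT' y < fTab N a aT' bT' x) := by
      apply Finset.filter_congr
      intro y _
      rw [← not_le, ← not_le]
      rw [hiff x y]
    have h1 := card_lt_set (fTab N a aT bT) n (fTab_fiber hab hT ha hb) (fTab N a aT bT x)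
    have h2 := card_lt_set (fTab N a aT' bT') n (fTab_fiber hab hT' ha' hb')
      (fTab N a aT' bT' x)
    rw [hset, h2] at h1
    have hv1 := fTab_lt_k (aT := aT) (bT := bT) hab ha hb x
    have hv2 := fTab_lt_k (aT := aT') (bT := bT') hab ha' hb' x
    rcases lt_trichotomy (fTab N a aT bT x) (fTab N a aT' bT' x) with h | h | h
    · have := psum_lt_psum hn h (by omega)
      omega
    · exact h
    · have := psum_lt_psum hn h (by omega)
      omega
  have hfeq' : fTab N a aT bT = fTab N a aT' bT' := funext hfeq
  constructor
  · funext j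
    have e1 := fTab_fiber_A (aT := aT) (bT := bT) hab ha (j : ℕ)
    have e2 := fTab_fiber_A (aT := aT') (bT := bT') hab ha' (j : ℕ)
    rw [hfeq'] at e1
    rw [e2] at e1
    have d1 : nExt aT (j : ℕ) = aT j := by unfold nExt; rw [dif_pos j.isLt]
    have d2 : nExt aT' (j : ℕ) = aT' j := by unfold nExt; rw [dif_pos j.isLt]
    rw [d1, d2] at e1
    exact e1.symm
  · funext j
    have e1 := fTab_fiber_B (aT := aT) (bT := bT) hab hb (j : ℕ)
    have e2 := fTab_fiber_B (aT := aT') (bT := bT') hab hb' (j : ℕ)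
    rw [hfeq'] at e1
    rw [e2] at e1
    have d1 : nExt bT (j : ℕ) = bT j := by unfold nExt; rw [dif_pos j.isLt]
    have d2 : nExt bT' (j : ℕ) = bT' j := by unfold nExt; rw [dif_pos j.isLt]
    rw [d1, d2] at e1
    exact e1.symm

lemma table_surj {n : Fin k → ℕ} (hab : a + b = N) (hsum : ∑ i, n i = N)
    (σ : Equiv.Perm (Fin N))
    (hm : ∀ x y : Fin N, (x : ℕ) ≤ (y : ℕ) → ((y : ℕ) < a ∨ a ≤ (x : ℕ)) →
      blkIdxF (nExt n) k ((σ.symm x : Fin N) : ℕ) ≤ blkIdxF (nExt n) k ((σ.symm y : Fin N) : ℕ)) :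
    ∃ aT bT : Fin k → ℕ, (∀ i, aT i + bT i = n i) ∧ (∑ i, aT i = a) ∧ (∑ i, bT i = b) ∧
      ∀ x : Fin N, blkIdxF (nExt n) k ((σ.symm x : Fin N) : ℕ) = fTab N a aT bT x := by
  set f : Fin N → ℕ := fun x => blkIdxF (nExt n) k ((σ.symm x : Fin N) : ℕ) with hfdef
  have hpn : psum n k = N := by rw [psum_k_eq_sum]; exact hsum
  have hflt : ∀ x, f x < k := fun x => blkIdxF_lt_k n (by rw [hpn]; exact (σ.symm x).isLt)
  have hfc : ∀ j : ℕ, (Finset.univ.filter (fun x : Fin N => f x = j)).card = nExt n j := by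
    intro j
    have e1 : (Finset.univ.filter (fun x : Fin N => f x = j)).card
        = (Finset.univ.filter (fun y : Fin N => blkIdxF (nExt n) k (y : ℕ) = j)).card :=
      card_filter_perm σ.symm (fun y : Fin N => blkIdxF (nExt n) k (y : ℕ) = j)
    rw [e1, card_filter_fin N (fun m => blkIdxF (nExt n) k m = j)]
    have hf := blkIdxF_fiber_card n j
    rw [hpn] at hf
    exact hf
  set aT : Fin k → ℕ :=
    fun i => (Finset.univ.filter (fun x : Fin N => (x : ℕ) < a ∧ f x = (i : ℕ))).card with haT
  set bT : Fin k → ℕ :=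
    fun i => (Finset.univ.filter (fun x : Fin N => a ≤ (x : ℕ) ∧ f x = (i : ℕ))).card with hbT
  have haTe : ∀ j : ℕ,
      (Finset.univ.filter (fun x : Fin N => (x : ℕ) < a ∧ f x = j)).card = nExt aT j := by
    intro j
    by_cases hj : j < k
    · rw [nExt_lt aT hj, haT]
    · rw [nExt_of_ge aT (le_of_not_gt hj)]
      rw [Finset.card_eq_zero, Finset.filter_eq_empty_iff]
      intro x _
      have := hflt x
      rintro ⟨_, h2⟩
      omega
  have hbTe : ∀ j : ℕ,
      (Finset.univ.filter (fun x : Fin N => a ≤ (x : ℕ) ∧ f x = j)).card = nExt bT j := by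
    intro j
    by_cases hj : j < k
    · rw [nExt_lt bT hj, hbT]
    · rw [nExt_of_ge bT (le_of_not_gt hj)]
      rw [Finset.card_eq_zero, Finset.filter_eq_empty_iff]
      intro x _
      have := hflt x
      rintro ⟨_, h2⟩
      omega
  have hsplitj : ∀ j : ℕ, nExt aT j + nExt bT j = nExt n j := by
    intro j
    rw [← haTe j, ← hbTe j, ← hfc j]
    have e1 : (Finset.univ.filter (fun x : Fin N => f x = j)).filter
          (fun x : Fin N => (x : ℕ) < a)
        = Finset.univ.filter (fun x : Fin N => (x : ℕ) < a ∧ f x = j) := by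
      ext x
      simp only [Finset.mem_filter, Finset.mem_univ, true_and]
      tauto
    have e2 : (Finset.univ.filter (fun x : Fin N => f x = j)).filter
          (fun x : Fin N => ¬ (x : ℕ) < a)
        = Finset.univ.filter (fun x : Fin N => a ≤ (x : ℕ) ∧ f x = j) := by
      ext x
      simp only [Finset.mem_filter, Finset.mem_univ, true_and, not_lt]
      tauto
    have hsplit := Finset.card_filter_add_card_filter_not
      (s := Finset.univ.filter (fun x : Fin N => f x = j)) (p := fun x : Fin N => (x : ℕ) < a)
    rw [e1, e2] at hsplit
    exact hsplit
  have hTcond : ∀ i : Fin k, aT i + bT i = n i := by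
    intro i
    have h := hsplitj (i : ℕ)
    rw [nExt_lt aT i.isLt, nExt_lt bT i.isLt, nExt_lt n i.isLt] at h
    exact h
  have hsa : ∑ i, aT i = a := by
    have h1 : psum aT k = (Finset.univ.filter (fun x : Fin N => (x : ℕ) < a)).card := by
      rw [card_filter_eq_sum_fibers (fun x : Fin N => (x : ℕ) < a) f k (fun x _ => hflt x)]
      unfold psum
      exact Finset.sum_congr rfl fun j _ => (haTe j).symm
    have h2 : (Finset.univ.filter (fun x : Fin N => (x : ℕ) < a)).card = a := by
      rw [card_filter_fin N (fun m => m < a)]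
      have e : (Finset.range N).filter (fun m => m < a) = Finset.range a := by
        ext m
        simp only [Finset.mem_filter, Finset.mem_range]
        omega
      rw [e, Finset.card_range]
    rw [← psum_k_eq_sum, h1, h2]
  have hsb : ∑ i, bT i = b := by
    have h1 : psum bT k = (Finset.univ.filter (fun x : Fin N => a ≤ (x : ℕ))).card := by
      rw [card_filter_eq_sum_fibers (fun x : Fin N => a ≤ (x : ℕ)) f k (fun x _ => hflt x)]
      unfold psum
      exact Finset.sum_congr rfl fun j _ => (hbTe j).symm
    have h2 : (Finset.univ.filter (fun x : Fin N => a ≤ (x : ℕ))).card = b := by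
      rw [card_filter_fin N (fun m => a ≤ m)]
      have e : (Finset.range N).filter (fun m => a ≤ m) = Finset.Ico a N := by
        ext m
        simp only [Finset.mem_filter, Finset.mem_range, Finset.mem_Ico]
        omega
      rw [e, Nat.card_Ico]
      omega
    rw [← psum_k_eq_sum, h1, h2]
  have hpa : psum aT k = a := by rw [psum_k_eq_sum]; exact hsa
  have hpb : psum bT k = b := by rw [psum_k_eq_sum]; exact hsb
  have haN : a ≤ N := by omega
  -- first half
  have hfst : ∀ t < psum aT k,
      (fun t => if h : t < N then f ⟨t, h⟩ else 0) t = blkIdxF (nExt aT) k t := by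
    apply eq_blkIdxF_of_mono_fibers
    · intro x y hxy hy
      rw [hpa] at hy
      have hxN : x < N := by omega
      have hyN : y < N := by omega
      simp only [dif_pos hxN, dif_pos hyN]
      exact hm ⟨x, hxN⟩ ⟨y, hyN⟩ hxy (Or.inl (by show y < a; omega))
    · intro j
      rw [hpa]
      rw [← range_filter_restrict a N haN]
      rw [← card_filter_fin N (fun t => t < a ∧
        (fun t => if h : t < N then f ⟨t, h⟩ else 0) t = j)]
      have hsame : Finset.univ.filter (fun x : Fin N => (x : ℕ) < a ∧
            (if h : (x : ℕ) < N then f ⟨(x : ℕ), h⟩ else 0) = j)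
          = Finset.univ.filter (fun x : Fin N => (x : ℕ) < a ∧ f x = j) := by
        ext x
        simp only [Finset.mem_filter, Finset.mem_univ, true_and, dif_pos x.isLt, Fin.eta]
      rw [hsame]
      exact haTe j
  -- second half
  have hsnd : ∀ t < psum bT k,
      (fun t => if h : t + a < N then f ⟨t + a, h⟩ else 0) t = blkIdxF (nExt bT) k t := by
    apply eq_blkIdxF_of_mono_fibers
    · intro x y hxy hy
      rw [hpb] at hy
      have hxN : x + a < N := by omega
      have hyN : y + a < N := by omega
      simp only [dif_pos hxN, dif_pos hyN]
      exact hm ⟨x + a, hxN⟩ ⟨y + a, hyN⟩ (by show x + a ≤ y + a; omega)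
        (Or.inr (by show a ≤ x + a; omega))
    · intro j
      rw [hpb]
      have hshift := card_filter_shift b a
        (fun u => (if h : u < N then f ⟨u, h⟩ else 0) = j)
      rw [hab] at hshift
      rw [hshift]
      rw [← card_filter_fin N (fun u => a ≤ u ∧ (if h : u < N then f ⟨u, h⟩ else 0) = j)]
      have hsame : Finset.univ.filter (fun x : Fin N => a ≤ (x : ℕ) ∧
            (if h : (x : ℕ) < N then f ⟨(x : ℕ), h⟩ else 0) = j)
          = Finset.univ.filter (fun x : Fin N => a ≤ (x : ℕ) ∧ f x = j) := by
        ext x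
        simp only [Finset.mem_filter, Finset.mem_univ, true_and, dif_pos x.isLt, Fin.eta]
      rw [hsame]
      exact hbTe j
  refine ⟨aT, bT, hTcond, hsa, hsb, ?_⟩
  intro x
  show f x = fTab N a aT bT x
  unfold fTab gTab
  by_cases hx : (x : ℕ) < a
  · rw [if_pos hx]
    have h2 := hfst (x : ℕ) (by rw [hpa]; exact hx)
    simp only [dif_pos x.isLt, Fin.eta] at h2
    exact h2
  · rw [if_neg hx]
    push_neg at hx
    have hbN : (x : ℕ) - a < psum bT k := by
      rw [hpb]
      have := x.isLt
      omega
    have h2 := hsnd ((x : ℕ) - a) hbN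
    have hcond : (x : ℕ) - a + a < N := by have := x.isLt; omega
    simp only [dif_pos hcond] at h2
    have hxeq : (⟨(x : ℕ) - a + a, hcond⟩ : Fin N) = x := by
      apply Fin.ext
      show (x : ℕ) - a + a = (x : ℕ)
      omega
    rw [hxeq] at h2
    exact h2



lemma patSet_congr {M : ℕ} {f g : Fin M → ℕ} (h : ∀ x, f x = g x) :
    patSet F M f = patSet F M g := by
  have : f = g := funext h
  rw [this]

lemma conj_sigmaTab_eq {n aT bT : Fin k → ℕ} (hab : a + b = N) (hT : ∀ i, aT i + bT i = n i)
    (ha : ∑ i, aT i = a) (hb : ∑ i, bT i = b) (hsum : ∑ i, n i = N) :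
    conjPerm F (sigmaTab N aT bT) (PparGL F N n) = patSet F N (fTab N a aT bT) := by
  rw [PparGL_eq_patSet, conjPerm_patSet]
  apply patSet_congr
  intro x
  show blkIdxF (nExt n) k (((sigmaTab N aT bT).symm x : Fin N) : ℕ) = fTab N a aT bT x
  have hsymm : (sigmaTab N aT bT).symm
      = Tuple.sort (fun y : Fin N => isBTab aT bT (y : ℕ)) := rfl
  rw [hsymm]
  exact blk_sort hab hT ha hb hsum x


/-- For a composition `α = (n_1, …, n_k)` of `N = a + b`, the map
`T ↦ σ_T P_α σ_T⁻¹` is a bijection from the set `𝒯^α_{a,b}` of tables onto the set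
`ℱ^α_{a,b}` of conjugates of `P_α` by permutation matrices that contain `P₀^H`. -/
theorem stmt1 (N a b k : ℕ) (hab : a + b = N) (n : Fin k → ℕ) (hn : ∀ i, 0 < n i)
    (hsum : ∑ i, n i = N) :
    Set.BijOn
      (fun T : (Fin k → ℕ) × (Fin k → ℕ) => conjPerm F (sigmaTab N T.1 T.2) (PparGL F N n))
      { T | (∀ i, T.1 i + T.2 i = n i) ∧ (∑ i, T.1 i = a) ∧ (∑ i, T.2 i = b) }
      { S | (∃ σ : Equiv.Perm (Fin N), S = conjPerm F σ (PparGL F N n)) ∧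
            P0HGL F N a ⊆ S } := by
  refine ⟨?_, ?_, ?_⟩
  · -- MapsTo
    rintro ⟨aT, bT⟩ ⟨hT, ha, hb⟩
    refine ⟨⟨sigmaTab N aT bT, rfl⟩, ?_⟩
    show P0HGL F N a ⊆ conjPerm F (sigmaTab N aT bT) (PparGL F N n)
    rw [conj_sigmaTab_eq F hab hT ha hb hsum]
    rw [P0H_subset_patSet_iff]
    exact fun x y hxy hh => fTab_mono_half x y hxy hh
  · -- InjOn
    rintro ⟨aT, bT⟩ ⟨hT, ha, hb⟩ ⟨aT', bT'⟩ ⟨hT', ha', hb'⟩ hEq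
    simp only at hEq
    rw [conj_sigmaTab_eq F hab hT ha hb hsum,
      conj_sigmaTab_eq F hab hT' ha' hb' hsum] at hEq
    have hiff : ∀ x y : Fin N, (fTab N a aT bT x ≤ fTab N a aT bT y ↔
        fTab N a aT' bT' x ≤ fTab N a aT' bT' y) := by
      intro x y
      by_cases hxy : x = y
      · subst hxy; simp
      · constructor
        · intro h
          have hmem := tUnit_mem_patSet F hxy h
          rw [hEq] at hmem
          exact le_of_tUnit_mem_patSet F hxy hmem
        · intro h
          have hmem := tUnit_mem_patSet F hxy h
          rw [← hEq] at hmem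
          exact le_of_tUnit_mem_patSet F hxy hmem
    obtain ⟨e1, e2⟩ := table_inj hab hn hT ha hb hT' ha' hb' hiff
    simp only [Prod.mk.injEq]
    exact ⟨e1, e2⟩
  · -- SurjOn
    rintro S ⟨⟨σ, rfl⟩, hsub⟩
    rw [PparGL_eq_patSet, conjPerm_patSet, P0H_subset_patSet_iff] at hsub
    obtain ⟨aT, bT, hT, ha, hb, hf⟩ := table_surj hab hsum σ hsub
    refine ⟨(aT, bT), ⟨hT, ha, hb⟩, ?_⟩
    show conjPerm F (sigmaTab N aT bT) (PparGL F N n) = conjPerm F σ (PparGL F N n)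
    rw [conj_sigmaTab_eq F hab hT ha hb hsum, PparGL_eq_patSet, conjPerm_patSet]
    apply patSet_congr
    intro x
    exact (hf x).symm

end Main

end Stmt1
end

section
/- Let F be a field, N = a + b with a, b ≥ 0, and α = (n_1,…,n_k) a composition of N. For T ∈ 𝒯^α_{a,b} given by the integers a_1,…,a_k, b_1,…,b_k, the following two identities of subgroups of GL_N(F) hold: (1) σ_T P_α σ_T⁻¹ ∩ (GL_a × GL_b) = P_{(a_1,…,a_k)} × P_{(b_1,…,b_k)}, and (2) σ_T M_α σ_T⁻¹ ∩ (GL_a × GL_b) = M_{(a_1,…,a_k)} × M_{(b_1,…,b_k)}. Here GL_a × GL_b is embedded block diagonally in GL_N(F), P_{(a_1,…,a_k)} ≤ GL_a(F) and P_{(b_1,…,b_k)} ≤ GL_b(F) are the block upper triangular subgroups for the indicated compositions (entries equal to 0 being ignored), and similarly for the Levi subgroups M. -/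
open scoped MatrixGroups Matrix

namespace Stmt3

variable (F : Type*) [Field F]

/-- Extension of a tuple `n : Fin k → ℕ` by zero to all of `ℕ`. -/
def nExt {k : ℕ} (n : Fin k → ℕ) : ℕ → ℕ := fun i => if h : i < k then n ⟨i, h⟩ else 0

/-- Partial sums `ν_j = n 0 + ⋯ + n (j-1)`. -/
def psum {k : ℕ} (n : Fin k → ℕ) (j : ℕ) : ℕ := ∑ i ∈ Finset.range j, nExt n i

/-- Block index of a position `x` with respect to the composition `c` with `K` parts. -/
def blkIdxF (c : ℕ → ℕ) (K : ℕ) (x : ℕ) : ℕ :=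
  ((Finset.range K).filter (fun j => (∑ i ∈ Finset.range (j + 1), c i) ≤ x)).card

/-- The standard parabolic `P_n ≤ GL_M(F)` (as a set). -/
def PparGL (M : ℕ) {k : ℕ} (n : Fin k → ℕ) : Set (GL (Fin M) F) :=
  { g | ∀ i j : Fin M, blkIdxF (nExt n) k (j : ℕ) < blkIdxF (nExt n) k (i : ℕ) →
      g.val i j = 0 }

/-- The standard Levi `M_n ≤ GL_M(F)` (as a set): block diagonal invertible matrices. -/
def MparGL (M : ℕ) {k : ℕ} (n : Fin k → ℕ) : Set (GL (Fin M) F) :=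
  { g | ∀ i j : Fin M, blkIdxF (nExt n) k (j : ℕ) ≠ blkIdxF (nExt n) k (i : ℕ) →
      g.val i j = 0 }

/-- Conjugation `σ S σ⁻¹` by the permutation matrix of `σ`. -/
def conjPerm {M : ℕ} (σ : Equiv.Perm (Fin M)) (S : Set (GL (Fin M) F)) :
    Set (GL (Fin M) F) :=
  { g | ∃ p ∈ S, g.val = (p.val).submatrix σ.symm σ.symm }

def blkPair {k : ℕ} (aT bT : Fin k → ℕ) (x : ℕ) : ℕ :=
  ((Finset.range k).filter (fun j => psum aT (j + 1) + psum bT (j + 1) ≤ x)).card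

def isBTab {k : ℕ} (aT bT : Fin k → ℕ) (x : ℕ) : Bool :=
  decide (psum aT (blkPair aT bT x + 1) + psum bT (blkPair aT bT x) ≤ x)

/-- The permutation `σ_T` attached to a table `T = (aT, bT)`. -/
noncomputable def sigmaTab (N : ℕ) {k : ℕ} (aT bT : Fin k → ℕ) : Equiv.Perm (Fin N) :=
  (Tuple.sort (fun x : Fin N => isBTab aT bT (x : ℕ)))⁻¹

lemma csum_mono (c : ℕ → ℕ) : Monotone (fun j => ∑ i ∈ Finset.range j, c i) :=
  fun _ _ h => Finset.sum_le_sum_of_subset (Finset.range_subset_range.2 h)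

lemma blk_unique (c : ℕ → ℕ) {K j x : ℕ} (hj : j < K)
    (h1 : ∑ i ∈ Finset.range j, c i ≤ x) (h2 : x < ∑ i ∈ Finset.range (j+1), c i) :
    blkIdxF c K x = j := by
  unfold blkIdxF
  have heq : (Finset.range K).filter (fun m => (∑ i ∈ Finset.range (m+1), c i) ≤ x)
      = Finset.range j := by
    ext m
    simp only [Finset.mem_filter, Finset.mem_range]
    constructor
    · rintro ⟨hmK, hm⟩
      by_contra hc
      push_neg at hc
      exact absurd (le_trans (csum_mono c (by omega : j + 1 ≤ m + 1)) hm) (not_le.2 h2)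
    · intro hmj
      exact ⟨by omega, le_trans (csum_mono c (by omega : m + 1 ≤ j)) h1⟩
  rw [heq, Finset.card_range]

lemma blk_spec (c : ℕ → ℕ) {K x : ℕ} (hx : x < ∑ i ∈ Finset.range K, c i) :
    blkIdxF c K x < K ∧ (∑ i ∈ Finset.range (blkIdxF c K x), c i) ≤ x ∧
      x < ∑ i ∈ Finset.range (blkIdxF c K x + 1), c i := by
  classical
  set s := (Finset.range K).filter (fun m => (∑ i ∈ Finset.range (m+1), c i) ≤ x) with hs
  have hdc : ∀ m ∈ s, ∀ i, i < m → i ∈ s := by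
    intro m hm i him
    simp only [hs, Finset.mem_filter, Finset.mem_range] at hm ⊢
    exact ⟨by omega, le_trans (csum_mono c (by omega : i + 1 ≤ m + 1)) hm.2⟩
  have hsub : s ⊆ Finset.range s.card := by
    intro m hm
    have hss : Finset.range (m+1) ⊆ s := by
      intro i hi
      rcases Nat.lt_succ_iff_lt_or_eq.1 (Finset.mem_range.1 hi) with h | h
      · exact hdc m hm i h
      · exact h ▸ hm
    have := Finset.card_le_card hss
    simp only [Finset.card_range] at this
    exact Finset.mem_range.2 (by omega)
  have hseq : s = Finset.range s.card :=
    Finset.eq_of_subset_of_card_le hsub (by rw [Finset.card_range])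
  have hmem : ∀ m, m ∈ s ↔ m < s.card := by
    intro m
    rw [Finset.ext_iff.1 hseq m, Finset.mem_range]
  have hmem2 : ∀ m, m ∈ s ↔ (m < K ∧ (∑ i ∈ Finset.range (m+1), c i) ≤ x) := by
    intro m
    rw [hs, Finset.mem_filter, Finset.mem_range]
  have hBdef : blkIdxF c K x = s.card := rfl
  rw [hBdef]
  have hBK : s.card < K := by
    by_contra hc
    push_neg at hc
    rcases Nat.eq_zero_or_pos K with hK | hK
    · simp [hK] at hx
    · have h1 : K - 1 ∈ s := (hmem _).2 (by omega)
      have h2 := ((hmem2 _).1 h1).2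
      have he : K - 1 + 1 = K := by omega
      rw [he] at h2
      omega
  refine ⟨hBK, ?_, ?_⟩
  · rcases Nat.eq_zero_or_pos s.card with h0 | h0
    · simp [h0]
    · have h1 : s.card - 1 ∈ s := (hmem _).2 (by omega)
      have h2 := ((hmem2 _).1 h1).2
      have he : s.card - 1 + 1 = s.card := by omega
      rwa [he] at h2
  · by_contra hc
    push_neg at hc
    have : s.card ∈ s := (hmem2 _).2 ⟨hBK, hc⟩
    have := (hmem _).1 this
    omega

lemma blk_mono (c : ℕ → ℕ) (K : ℕ) : Monotone (blkIdxF c K) := by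
  intro x y hxy
  unfold blkIdxF
  apply Finset.card_le_card
  intro j hj
  simp only [Finset.mem_filter, Finset.mem_range] at hj ⊢
  omega

lemma psum_succ' {k : ℕ} (m : Fin k → ℕ) (j : ℕ) :
    psum m (j+1) = psum m j + nExt m j := Finset.sum_range_succ _ _

lemma psum_mono {k : ℕ} (m : Fin k → ℕ) : Monotone (psum m) := csum_mono _

lemma psum_tot {k : ℕ} (m : Fin k → ℕ) : psum m k = ∑ i, m i := by
  rw [psum, ← Fin.sum_univ_eq_sum_range]
  apply Finset.sum_congr rfl
  intro i _
  simp [nExt]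

lemma csum_pair {k : ℕ} (aT bT : Fin k → ℕ) (j : ℕ) :
    ∑ i ∈ Finset.range j, (nExt aT i + nExt bT i) = psum aT j + psum bT j :=
  Finset.sum_add_distrib

lemma nExt_append_left {k : ℕ} (aT bT : Fin k → ℕ) {i : ℕ} (hi : i < k) :
    nExt (Fin.append aT bT) i = aT ⟨i, hi⟩ := by
  have h2 : i < k + k := by omega
  rw [nExt]
  simp only [dif_pos h2]
  have : (⟨i, h2⟩ : Fin (k+k)) = Fin.castAdd k ⟨i, hi⟩ := rfl
  rw [this, Fin.append_left]

lemma nExt_append_right {k : ℕ} (aT bT : Fin k → ℕ) {i : ℕ} (hi : i < k) :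
    nExt (Fin.append aT bT) (k + i) = bT ⟨i, hi⟩ := by
  have h2 : k + i < k + k := by omega
  rw [nExt]
  simp only [dif_pos h2]
  have : (⟨k + i, h2⟩ : Fin (k+k)) = Fin.natAdd k ⟨i, hi⟩ := rfl
  rw [this, Fin.append_right]

lemma psum_append_le {k : ℕ} (aT bT : Fin k → ℕ) {j : ℕ} (hj : j ≤ k) :
    psum (Fin.append aT bT) j = psum aT j := by
  apply Finset.sum_congr rfl
  intro i hi
  have hik : i < k := lt_of_lt_of_le (Finset.mem_range.1 hi) hj
  rw [nExt_append_left aT bT hik, nExt, dif_pos hik]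

lemma psum_append_add {k : ℕ} (aT bT : Fin k → ℕ) {j : ℕ} (hj : j ≤ k) :
    psum (Fin.append aT bT) (k + j) = psum aT k + psum bT j := by
  induction j with
  | zero => simpa [psum] using psum_append_le aT bT le_rfl
  | succ m ih =>
    have hm : m ≤ k := by omega
    have hmk : m < k := by omega
    have h1 : psum (Fin.append aT bT) (k + (m+1))
        = psum (Fin.append aT bT) (k+m) + nExt (Fin.append aT bT) (k+m) := by
      rw [← Nat.add_assoc]
      exact psum_succ' _ _
    rw [h1, ih hm, nExt_append_right aT bT hmk, psum_succ' bT m, nExt, dif_pos hmk]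
    omega


lemma blkPair_eq {k : ℕ} (aT bT : Fin k → ℕ) (y : ℕ) :
    blkPair aT bT y = blkIdxF (fun i => nExt aT i + nExt bT i) k y := by
  unfold blkPair blkIdxF
  congr 1
  apply Finset.filter_congr
  intro j _
  simp [psum, Finset.sum_add_distrib]

/-- The explicit sorting map. -/
def g0 {k : ℕ} (aT bT : Fin k → ℕ) (a : ℕ) (x : ℕ) : ℕ :=
  if x < a then
    psum aT (blkIdxF (nExt aT) k x) + psum bT (blkIdxF (nExt aT) k x)
      + (x - psum aT (blkIdxF (nExt aT) k x))
  else
    psum aT (blkIdxF (nExt bT) k (x - a) + 1) + psum bT (blkIdxF (nExt bT) k (x - a))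
      + (x - a - psum bT (blkIdxF (nExt bT) k (x - a)))

lemma g0_spec_lt {k a : ℕ} (aT bT : Fin k → ℕ) (ha : psum aT k = a) {x : ℕ} (hx : x < a) :
    ∃ j, blkIdxF (nExt aT) k x = j ∧ j < k ∧ psum aT j ≤ x ∧ x < psum aT (j+1) ∧
      g0 aT bT a x = psum aT j + psum bT j + (x - psum aT j) ∧
      psum aT j + psum bT j ≤ g0 aT bT a x ∧
      g0 aT bT a x < psum aT (j+1) + psum bT j := by
  obtain ⟨h1, h2, h3⟩ := blk_spec (nExt aT) (K := k) (x := x) (by rw [← psum] at *; omega)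
  rw [← psum] at h2 h3
  refine ⟨_, rfl, h1, h2, h3, by rw [g0, if_pos hx], by rw [g0, if_pos hx]; omega,
    by rw [g0, if_pos hx]; omega⟩

lemma g0_spec_ge {k a b : ℕ} (aT bT : Fin k → ℕ) (hb : psum bT k = b) {x : ℕ}
    (hx1 : a ≤ x) (hx2 : x < a + b) :
    ∃ j, blkIdxF (nExt bT) k (x - a) = j ∧ j < k ∧ psum bT j ≤ x - a ∧
      x - a < psum bT (j+1) ∧
      g0 aT bT a x = psum aT (j+1) + psum bT j + (x - a - psum bT j) ∧
      psum aT (j+1) + psum bT j ≤ g0 aT bT a x ∧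
      g0 aT bT a x < psum aT (j+1) + psum bT (j+1) := by
  obtain ⟨h1, h2, h3⟩ := blk_spec (nExt bT) (K := k) (x := x - a) (by rw [← psum]; omega)
  rw [← psum] at h2 h3
  have hnot : ¬ x < a := by omega
  refine ⟨_, rfl, h1, h2, h3, by rw [g0, if_neg hnot], by rw [g0, if_neg hnot]; omega,
    by rw [g0, if_neg hnot]; omega⟩


lemma key {N a b k : ℕ} (hab : a + b = N) (aT bT : Fin k → ℕ)
    (ha : psum aT k = a) (hb : psum bT k = b) :
    ∀ x : Fin N,
      (blkIdxF (nExt (Fin.append aT bT)) (k + k) (x : ℕ) =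
        if (x:ℕ) < a then blkIdxF (nExt aT) k (x:ℕ)
          else k + blkIdxF (nExt bT) k ((x:ℕ) - a)) ∧
      (blkIdxF (fun i => nExt aT i + nExt bT i) k (((sigmaTab N aT bT).symm x : Fin N) : ℕ) =
        if (x:ℕ) < a then blkIdxF (nExt aT) k (x:ℕ)
          else blkIdxF (nExt bT) k ((x:ℕ) - a)) ∧
      (blkIdxF (nExt ![a, b]) 2 (x : ℕ) = if (x:ℕ) < a then 0 else 1) ∧
      ((x:ℕ) < a → blkIdxF (nExt aT) k (x:ℕ) < k) := by
  classical
  have hg0lt : ∀ x : Fin N, g0 aT bT a (x:ℕ) < N := by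
    intro x
    by_cases hx : (x:ℕ) < a
    · obtain ⟨j, hj, hjk, h2, h3, he, hl, hu⟩ := g0_spec_lt aT bT ha hx
      have m1 : psum aT (j+1) ≤ psum aT k := psum_mono aT (by omega)
      have m2 : psum bT j ≤ psum bT k := psum_mono bT (by omega)
      omega
    · have hxN := x.isLt
      obtain ⟨j, hj, hjk, h2, h3, he, hl, hu⟩ :=
        g0_spec_ge aT bT hb (a := a) (x := (x:ℕ)) (by omega) (by omega)
      have m1 : psum aT (j+1) ≤ psum aT k := psum_mono aT (by omega)
      have m2 : psum bT (j+1) ≤ psum bT k := psum_mono bT (by omega)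
      omega
  set gF : Fin N → Fin N := fun x => ⟨g0 aT bT a (x:ℕ), hg0lt x⟩ with hgF
  have hblk : ∀ x : Fin N, blkIdxF (fun i => nExt aT i + nExt bT i) k (g0 aT bT a (x:ℕ)) =
      if (x:ℕ) < a then blkIdxF (nExt aT) k (x:ℕ)
        else blkIdxF (nExt bT) k ((x:ℕ) - a) := by
    intro x
    by_cases hx : (x:ℕ) < a
    · obtain ⟨j, hj, hjk, h2, h3, he, hl, hu⟩ := g0_spec_lt aT bT ha hx
      rw [if_pos hx, hj]
      apply blk_unique _ hjk
      · rw [csum_pair]; omega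
      · rw [csum_pair]
        have := psum_succ' bT j
        omega
    · have hxN := x.isLt
      obtain ⟨j, hj, hjk, h2, h3, he, hl, hu⟩ :=
        g0_spec_ge aT bT hb (a := a) (x := (x:ℕ)) (by omega) (by omega)
      rw [if_neg hx, hj]
      apply blk_unique _ hjk
      · rw [csum_pair]
        have := psum_succ' aT j
        omega
      · rw [csum_pair]; omega
  have hfval : ∀ x : Fin N, isBTab aT bT (g0 aT bT a (x:ℕ)) = decide (a ≤ (x:ℕ)) := by
    intro x
    unfold isBTab
    rw [blkPair_eq, hblk x]
    by_cases hx : (x:ℕ) < a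
    · obtain ⟨j, hj, hjk, h2, h3, he, hl, hu⟩ := g0_spec_lt aT bT ha hx
      rw [if_pos hx, hj, decide_eq_decide]
      omega
    · have hxN := x.isLt
      obtain ⟨j, hj, hjk, h2, h3, he, hl, hu⟩ :=
        g0_spec_ge aT bT hb (a := a) (x := (x:ℕ)) (by omega) (by omega)
      rw [if_neg hx, hj, decide_eq_decide]
      omega
  have hinj : Function.Injective gF := by
    intro x y hxy
    have hval : g0 aT bT a (x:ℕ) = g0 aT bT a (y:ℕ) := congrArg Fin.val hxy
    have hfeq := hfval x
    rw [hval, hfval y] at hfeq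
    have hhalf : ((x:ℕ) < a ↔ (y:ℕ) < a) := by
      have := decide_eq_decide.1 hfeq.symm
      omega
    have hblkeq := hblk x
    rw [hval, hblk y] at hblkeq
    by_cases hx : (x:ℕ) < a
    · have hy : (y:ℕ) < a := hhalf.1 hx
      rw [if_pos hx, if_pos hy] at hblkeq
      obtain ⟨j, hj, hjk, h2, h3, he, hl, hu⟩ := g0_spec_lt aT bT ha hx
      obtain ⟨j', hj', hjk', h2', h3', he', hl', hu'⟩ := g0_spec_lt aT bT ha hy
      rw [hj, hj'] at hblkeq
      subst hblkeq
      exact Fin.ext (by omega)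
    · have hy : ¬ (y:ℕ) < a := fun h => hx (hhalf.2 h)
      have hxN := x.isLt
      have hyN := y.isLt
      rw [if_neg hx, if_neg hy] at hblkeq
      obtain ⟨j, hj, hjk, h2, h3, he, hl, hu⟩ :=
        g0_spec_ge aT bT hb (a := a) (x := (x:ℕ)) (by omega) (by omega)
      obtain ⟨j', hj', hjk', h2', h3', he', hl', hu'⟩ :=
        g0_spec_ge aT bT hb (a := a) (x := (y:ℕ)) (by omega) (by omega)
      rw [hj, hj'] at hblkeq
      subst hblkeq
      exact Fin.ext (by omega)
  have hbij : Function.Bijective gF := Finite.injective_iff_bijective.1 hinj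
  set τ0 : Equiv.Perm (Fin N) := Equiv.ofBijective gF hbij with hτ0
  have hτ0c : ∀ x : Fin N, ((τ0 x : Fin N) : ℕ) = g0 aT bT a (x:ℕ) := fun _ => rfl
  have hsort : τ0 = Tuple.sort (fun x : Fin N => isBTab aT bT (x : ℕ)) := by
    rw [Tuple.eq_sort_iff]
    constructor
    · intro x y hxy
      show isBTab aT bT ((τ0 x : Fin N) : ℕ) ≤ isBTab aT bT ((τ0 y : Fin N) : ℕ)
      rw [hτ0c, hτ0c, hfval x, hfval y]
      have hxy' : (x:ℕ) ≤ (y:ℕ) := hxy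
      by_cases h1 : a ≤ (x:ℕ)
      · have h2 : a ≤ (y:ℕ) := by omega
        simp [h1, h2]
      · simp [h1]
    · intro i j hij hfeq
      have h1 : isBTab aT bT ((τ0 i : Fin N) : ℕ) = isBTab aT bT ((τ0 j : Fin N) : ℕ) := hfeq
      rw [hτ0c, hτ0c, hfval i, hfval j] at h1
      have hsame : ((i:ℕ) < a ↔ (j:ℕ) < a) := by
        have := decide_eq_decide.1 h1
        omega
      have hij' : (i:ℕ) < (j:ℕ) := hij
      rw [Fin.lt_def, hτ0c, hτ0c]
      by_cases hia : (i:ℕ) < a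
      · have hja : (j:ℕ) < a := by
          rcases Nat.lt_or_ge (j:ℕ) a with h | h
          · exact h
          · exact absurd (hsame.2 (by omega)) (by omega)
        obtain ⟨ji, hji, hjik, h2i, h3i, hei, hli, hui⟩ := g0_spec_lt aT bT ha hia
        obtain ⟨jj, hjj, hjjk, h2j, h3j, hej, hlj, huj⟩ := g0_spec_lt aT bT ha hja
        have hmono : ji ≤ jj := by
          rw [← hji, ← hjj]
          exact blk_mono _ _ (le_of_lt hij')
        rcases eq_or_lt_of_le hmono with heq | hlt
        · subst heq; omega
        · have m1 : psum aT (ji+1) ≤ psum aT jj := psum_mono aT hlt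
          have m2 : psum bT ji ≤ psum bT jj := psum_mono bT (le_of_lt hlt)
          omega
      · have hja : ¬ (j:ℕ) < a := fun h => hia (hsame.2 h)
        have hiN := i.isLt
        have hjN := j.isLt
        obtain ⟨ji, hji, hjik, h2i, h3i, hei, hli, hui⟩ :=
          g0_spec_ge aT bT hb (a := a) (x := (i:ℕ)) (by omega) (by omega)
        obtain ⟨jj, hjj, hjjk, h2j, h3j, hej, hlj, huj⟩ :=
          g0_spec_ge aT bT hb (a := a) (x := (j:ℕ)) (by omega) (by omega)
        have hmono : ji ≤ jj := by
          rw [← hji, ← hjj]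
          exact blk_mono _ _ (by omega)
        rcases eq_or_lt_of_le hmono with heq | hlt
        · subst heq; omega
        · have m1 : psum aT (ji+1) ≤ psum aT (jj+1) := psum_mono aT (by omega)
          have m2 : psum bT (ji+1) ≤ psum bT jj := psum_mono bT (by omega)
          omega
  have hss : ∀ x : Fin N, (sigmaTab N aT bT).symm x = τ0 x := by
    intro x
    rw [sigmaTab, ← hsort]
    rfl
  intro x
  refine ⟨?_, ?_, ?_, ?_⟩
  · by_cases hx : (x:ℕ) < a
    · rw [if_pos hx]
      obtain ⟨j, hj, hjk, h2, h3, _, _, _⟩ := g0_spec_lt aT bT ha hx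
      rw [hj]
      apply blk_unique _ (by omega : j < k + k)
      · show psum (Fin.append aT bT) j ≤ (x:ℕ)
        rw [psum_append_le aT bT (le_of_lt hjk)]
        exact h2
      · show (x:ℕ) < psum (Fin.append aT bT) (j+1)
        rw [psum_append_le aT bT (by omega : j+1 ≤ k)]
        exact h3
    · have hxN := x.isLt
      obtain ⟨j, hj, hjk, h2, h3, _, _, _⟩ :=
        g0_spec_ge aT bT hb (a := a) (x := (x:ℕ)) (by omega) (by omega)
      rw [if_neg hx, hj]
      apply blk_unique _ (by omega : k + j < k + k)
      · show psum (Fin.append aT bT) (k+j) ≤ (x:ℕ)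
        rw [psum_append_add aT bT (le_of_lt hjk), ha]
        omega
      · show (x:ℕ) < psum (Fin.append aT bT) (k+j+1)
        have he : k + j + 1 = k + (j + 1) := by omega
        rw [he, psum_append_add aT bT (by omega : j+1 ≤ k), ha]
        omega
  · rw [hss x]
    have := hblk x
    rw [← hτ0c x] at this
    exact this
  · have e1 : (∑ i ∈ Finset.range 1, nExt ![a,b] i) = a := by simp [nExt]
    have e2 : (∑ i ∈ Finset.range 2, nExt ![a,b] i) = a + b := by
      rw [Finset.sum_range_succ, e1]
      simp [nExt]
    have hxN := x.isLt
    by_cases hx : (x:ℕ) < a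
    · rw [if_pos hx]
      apply blk_unique _ (by omega : 0 < 2)
      · simp
      · show (x:ℕ) < ∑ i ∈ Finset.range 1, nExt ![a,b] i
        rw [e1]
        exact hx
    · rw [if_neg hx]
      apply blk_unique _ (by omega : 1 < 2)
      · rw [e1]; omega
      · show (x:ℕ) < ∑ i ∈ Finset.range 2, nExt ![a,b] i
        rw [e2]
        omega
  · intro hx
    obtain ⟨j, hj, hjk, _⟩ := g0_spec_lt aT bT ha hx
    rw [hj]
    exact hjk


lemma conjPerm_mem {M : ℕ} (σ : Equiv.Perm (Fin M)) (r : Fin M → Fin M → Prop)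
    (g : GL (Fin M) F) :
    g ∈ conjPerm F σ {p : GL (Fin M) F | ∀ i j, r i j → p.val i j = 0} ↔
      ∀ i j, r (σ.symm i) (σ.symm j) → g.val i j = 0 := by
  constructor
  · rintro ⟨p, hp, hval⟩ i j hij
    rw [hval]
    exact hp _ _ hij
  · intro h
    refine ⟨⟨g.val.submatrix σ σ, (↑g⁻¹ : Matrix (Fin M) (Fin M) F).submatrix σ σ, ?_, ?_⟩,
      ?_, ?_⟩
    · rw [Matrix.submatrix_mul_equiv, Units.mul_inv, Matrix.submatrix_one_equiv]
    · rw [Matrix.submatrix_mul_equiv, Units.inv_mul, Matrix.submatrix_one_equiv]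
    · intro i j hij
      have := h (σ i) (σ j)
      simp only [Equiv.symm_apply_apply] at this
      exact this hij
    · show g.val = (g.val.submatrix σ σ).submatrix σ.symm σ.symm
      rw [Matrix.submatrix_submatrix]
      simp

/-- For a table `T ∈ 𝒯^α_{a,b}` with rows `aT = (a_1,…,a_k)` and
`bT = (b_1,…,b_k)`:
(1) `σ_T P_α σ_T⁻¹ ∩ (GL_a × GL_b) = P_{(a_1,…,a_k)} × P_{(b_1,…,b_k)}`, and
(2) `σ_T M_α σ_T⁻¹ ∩ (GL_a × GL_b) = M_{(a_1,…,a_k)} × M_{(b_1,…,b_k)}`.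
Here `GL_a × GL_b` is embedded block diagonally (the Levi `M_{(a,b)}`), and the products of
parabolic (resp. Levi) subgroups are realized inside it via the concatenated composition
`(a_1,…,a_k,b_1,…,b_k)` of `N`. -/
theorem stmt3 (N a b k : ℕ) (hab : a + b = N) (n : Fin k → ℕ) (hn : ∀ i, 0 < n i)
    (hsum : ∑ i, n i = N) (aT bT : Fin k → ℕ)
    (hT : (∀ i, aT i + bT i = n i) ∧ (∑ i, aT i = a) ∧ (∑ i, bT i = b)) :
    conjPerm F (sigmaTab N aT bT) (PparGL F N n) ∩ MparGL F N ![a, b] =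
      MparGL F N ![a, b] ∩ PparGL F N (Fin.append aT bT) ∧
    conjPerm F (sigmaTab N aT bT) (MparGL F N n) ∩ MparGL F N ![a, b] =
      MparGL F N (Fin.append aT bT) := by
  obtain ⟨hTn, hTa, hTb⟩ := hT
  have ha : psum aT k = a := by rw [psum_tot]; exact hTa
  have hb : psum bT k = b := by rw [psum_tot]; exact hTb
  have hnEq : ∀ y, blkIdxF (nExt n) k y = blkIdxF (fun i => nExt aT i + nExt bT i) k y := by
    intro y
    congr 1
    funext i
    unfold nExt
    by_cases h : i < k
    · simp only [dif_pos h]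
      exact (hTn ⟨i, h⟩).symm
    · simp [dif_neg h]
  have hk := key hab aT bT ha hb
  have hγ : ∀ x : Fin N, blkIdxF (nExt (Fin.append aT bT)) (k + k) (x : ℕ) =
      if (x:ℕ) < a then blkIdxF (nExt aT) k (x:ℕ)
        else k + blkIdxF (nExt bT) k ((x:ℕ) - a) := fun x => (hk x).1
  have hν : ∀ x : Fin N,
      blkIdxF (fun i => nExt aT i + nExt bT i) k (((sigmaTab N aT bT).symm x : Fin N) : ℕ) =
      if (x:ℕ) < a then blkIdxF (nExt aT) k (x:ℕ)
        else blkIdxF (nExt bT) k ((x:ℕ) - a) := fun x => (hk x).2.1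
  have hβ : ∀ x : Fin N, blkIdxF (nExt ![a, b]) 2 (x : ℕ) = if (x:ℕ) < a then 0 else 1 :=
    fun x => (hk x).2.2.1
  have hA : ∀ x : Fin N, (x:ℕ) < a → blkIdxF (nExt aT) k (x:ℕ) < k := fun x => (hk x).2.2.2
  constructor
  · apply Set.ext
    intro g
    have hmemP : g ∈ conjPerm F (sigmaTab N aT bT) (PparGL F N n) ↔
        (∀ i j : Fin N,
          blkIdxF (nExt n) k (((sigmaTab N aT bT).symm j : Fin N) : ℕ) <
            blkIdxF (nExt n) k (((sigmaTab N aT bT).symm i : Fin N) : ℕ) → g.val i j = 0) :=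
      conjPerm_mem F (sigmaTab N aT bT)
        (fun i j : Fin N => blkIdxF (nExt n) k (j:ℕ) < blkIdxF (nExt n) k (i:ℕ)) g
    rw [Set.mem_inter_iff, Set.mem_inter_iff, hmemP]
    simp only [MparGL, PparGL, Set.mem_setOf_eq]
    constructor
    · rintro ⟨h1, h2⟩
      refine ⟨h2, ?_⟩
      intro i j hij
      rw [hγ i, hγ j] at hij
      by_cases hia : (i:ℕ) < a <;> by_cases hja : (j:ℕ) < a
      · rw [if_pos hia] at hij
        rw [if_pos hja] at hij
        apply h1 i j
        rw [hnEq, hnEq, hν i, hν j, if_pos hia, if_pos hja]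
        exact hij
      · rw [if_pos hia, if_neg hja] at hij
        have := hA i hia
        omega
      · apply h2 i j
        rw [hβ i, hβ j, if_neg hia, if_pos hja]
        omega
      · rw [if_neg hia, if_neg hja] at hij
        apply h1 i j
        rw [hnEq, hnEq, hν i, hν j, if_neg hia, if_neg hja]
        omega
    · rintro ⟨h2, h3⟩
      refine ⟨?_, h2⟩
      intro i j hij
      rw [hnEq, hnEq, hν i, hν j] at hij
      by_cases hia : (i:ℕ) < a <;> by_cases hja : (j:ℕ) < a
      · apply h3 i j
        rw [if_pos hia, if_pos hja] at hij
        rw [hγ i, hγ j, if_pos hia, if_pos hja]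
        exact hij
      · apply h2 i j
        rw [hβ i, hβ j, if_pos hia, if_neg hja]
        omega
      · apply h2 i j
        rw [hβ i, hβ j, if_neg hia, if_pos hja]
        omega
      · apply h3 i j
        rw [if_neg hia, if_neg hja] at hij
        rw [hγ i, hγ j, if_neg hia, if_neg hja]
        omega
  · apply Set.ext
    intro g
    have hmemM : g ∈ conjPerm F (sigmaTab N aT bT) (MparGL F N n) ↔
        (∀ i j : Fin N,
          blkIdxF (nExt n) k (((sigmaTab N aT bT).symm j : Fin N) : ℕ) ≠
            blkIdxF (nExt n) k (((sigmaTab N aT bT).symm i : Fin N) : ℕ) → g.val i j = 0) :=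
      conjPerm_mem F (sigmaTab N aT bT)
        (fun i j : Fin N => blkIdxF (nExt n) k (j:ℕ) ≠ blkIdxF (nExt n) k (i:ℕ)) g
    rw [Set.mem_inter_iff, hmemM]
    simp only [MparGL, Set.mem_setOf_eq]
    constructor
    · rintro ⟨h1, h2⟩
      intro i j hij
      rw [hγ i, hγ j] at hij
      by_cases hia : (i:ℕ) < a <;> by_cases hja : (j:ℕ) < a
      · rw [if_pos hia, if_pos hja] at hij
        apply h1 i j
        rw [hnEq, hnEq, hν i, hν j, if_pos hia, if_pos hja]
        exact hij
      · apply h2 i j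
        rw [hβ i, hβ j, if_pos hia, if_neg hja]
        omega
      · apply h2 i j
        rw [hβ i, hβ j, if_neg hia, if_pos hja]
        omega
      · rw [if_neg hia, if_neg hja] at hij
        apply h1 i j
        rw [hnEq, hnEq, hν i, hν j, if_neg hia, if_neg hja]
        omega
    · intro h
      constructor
      · intro i j hij
        rw [hnEq, hnEq, hν i, hν j] at hij
        apply h i j
        rw [hγ i, hγ j]
        by_cases hia : (i:ℕ) < a <;> by_cases hja : (j:ℕ) < a
        · rw [if_pos hia, if_pos hja] at hij ⊢
          exact hij
        · rw [if_pos hia, if_neg hja]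
          have := hA i hia
          omega
        · rw [if_neg hia, if_pos hja]
          have := hA j hja
          omega
        · rw [if_neg hia, if_neg hja] at hij ⊢
          omega
      · intro i j hij
        rw [hβ i, hβ j] at hij
        apply h i j
        rw [hγ i, hγ j]
        by_cases hia : (i:ℕ) < a <;> by_cases hja : (j:ℕ) < a
        · rw [if_pos hia, if_pos hja] at hij
          omega
        · rw [if_pos hia, if_neg hja]
          have := hA i hia
          omega
        · rw [if_neg hia, if_pos hja]
          have := hA j hja
          omega
        · rw [if_neg hia, if_neg hja] at hij
          omega


end Stmt3
end

section
/- Let F be a field, N = a + b with a, b ≥ 0, and α = (n_1,…,n_k; r) with n_1+⋯+n_k+r = N; set ν_k = n_1+⋯+n_k = N − r. Let w̃ ∈ Sp_N(F) be a monomial matrix (exactly one nonzero entry in each row and each column) and let w = τ𝔠 be the induced signed permutation of [1,N] (for i ∈ [1,N], w̃ maps the line F·e_i into F·e_{τ(i)} if i ∉ 𝔠 and into F·e_{2N+1−τ(i)} if i ∈ 𝔠). Assume 𝔠 ⊆ [1, ν_k] and that w̃ P_α w̃⁻¹ contains P₀^H = j(B_a × B_b). Then 𝔠 = ∅. -/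
open scoped MatrixGroups Matrix

namespace Stmt5

variable (F : Type*) [Field F]

/-- Extension of a tuple `n : Fin k → ℕ` by zero to all of `ℕ`. -/
def nExt {k : ℕ} (n : Fin k → ℕ) : ℕ → ℕ := fun i => if h : i < k then n ⟨i, h⟩ else 0

/-- Partial sums `ν_j = n 0 + ⋯ + n (j-1)`. -/
def psum {k : ℕ} (n : Fin k → ℕ) (j : ℕ) : ℕ := ∑ i ∈ Finset.range j, nExt n i

/-- Block index of a position `x` with respect to the composition `c` with `K` parts. -/
def blkIdxF (c : ℕ → ℕ) (K : ℕ) (x : ℕ) : ℕ :=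
  ((Finset.range K).filter (fun j => (∑ i ∈ Finset.range (j + 1), c i) ≤ x)).card

/-- The symplectic form `J_N = [[0, w_N], [-w_N, 0]]`, `w_N` the antidiagonal matrix. -/
def Jmat (N : ℕ) : Matrix (Fin (2 * N)) (Fin (2 * N)) F :=
  fun i j => if (i : ℕ) + (j : ℕ) = 2 * N - 1 then (if (i : ℕ) < N then 1 else -1) else 0

/-- The symplectic group `Sp_N(F) = { g ∈ GL_{2N}(F) : ᵗg J_N g = J_N }` (as a set). -/
def SpSet (N : ℕ) : Set (GL (Fin (2 * N)) F) :=
  { g | (g.val)ᵀ * Jmat F N * g.val = Jmat F N }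

/-- The composition `(n_1, …, n_k, 2r, n_k, …, n_1)` of `2N` underlying the standard
parabolic subgroup of `Sp_N` attached to `(n_1, …, n_k; r)`. -/
def cSp {k : ℕ} (n : Fin k → ℕ) (r : ℕ) : ℕ → ℕ :=
  fun i => if i < k then nExt n i else if i = k then 2 * r else nExt n (2 * k - i)

/-- The standard parabolic subgroup `P_{(n_1,…,n_k;r)}` of `Sp_N` (as a set): block upper
triangular symplectic matrices with diagonal blocks `n_1, …, n_k, 2r, n_k, …, n_1`. -/
def PparSp (N : ℕ) {k : ℕ} (n : Fin k → ℕ) (r : ℕ) : Set (GL (Fin (2 * N)) F) :=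
  { g | g ∈ SpSet F N ∧ ∀ i j : Fin (2 * N),
      blkIdxF (cSp n r) (2 * k + 1) (j : ℕ) < blkIdxF (cSp n r) (2 * k + 1) (i : ℕ) →
        g.val i j = 0 }

/-- The standard Levi subgroup `M_{(n_1,…,n_k;r)}` of `Sp_N` (as a set). -/
def MparSp (N : ℕ) {k : ℕ} (n : Fin k → ℕ) (r : ℕ) : Set (GL (Fin (2 * N)) F) :=
  { g | g ∈ SpSet F N ∧ ∀ i j : Fin (2 * N),
      blkIdxF (cSp n r) (2 * k + 1) (j : ℕ) ≠ blkIdxF (cSp n r) (2 * k + 1) (i : ℕ) →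
        g.val i j = 0 }

/-- The doubled permutation `σ̃` of `[0, 2N)` attached to `σ ∈ S_N`:
`i ↦ σ i` and `2N - 1 - i ↦ 2N - 1 - σ i` for `i < N`. -/
def dPerm (N : ℕ) (σ : Equiv.Perm (Fin N)) : Equiv.Perm (Fin (2 * N)) :=
  (Equiv.permCongr (finSumFinEquiv.trans (finCongr (two_mul N).symm)))
    (Equiv.sumCongr σ (Fin.revPerm.trans (σ.trans Fin.revPerm)))

/-- The matrix `j(h₁, h₂)`: for `h₁ = [[A, B], [C, D]]` of size `2a × 2a` (blocks of size
`a × a`) and `h₂` of size `2b × 2b`, the `2(a+b) × 2(a+b)` matrix with `A, B, C, D` in the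
four corner `a × a` blocks and `h₂` in the central `2b × 2b` block. -/
def jEmbed (a b : ℕ) (h1 : Matrix (Fin (2 * a)) (Fin (2 * a)) F)
    (h2 : Matrix (Fin (2 * b)) (Fin (2 * b)) F) :
    Matrix (Fin (2 * (a + b))) (Fin (2 * (a + b))) F := fun x y =>
  if hx : (x : ℕ) < a then
    if hy : (y : ℕ) < a then h1 ⟨(x : ℕ), by omega⟩ ⟨(y : ℕ), by omega⟩
    else if hy2 : a + 2 * b ≤ (y : ℕ) then
      h1 ⟨(x : ℕ), by omega⟩ ⟨(y : ℕ) - 2 * b, by have := y.isLt; omega⟩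
    else 0
  else if hx2 : a + 2 * b ≤ (x : ℕ) then
    if hy : (y : ℕ) < a then
      h1 ⟨(x : ℕ) - 2 * b, by have := x.isLt; omega⟩ ⟨(y : ℕ), by omega⟩
    else if hy2 : a + 2 * b ≤ (y : ℕ) then
      h1 ⟨(x : ℕ) - 2 * b, by have := x.isLt; omega⟩ ⟨(y : ℕ) - 2 * b, by have := y.isLt; omega⟩
    else 0
  else
    if hy : a ≤ (y : ℕ) ∧ (y : ℕ) < a + 2 * b then
      h2 ⟨(x : ℕ) - a, by omega⟩ ⟨(y : ℕ) - a, by omega⟩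
    else 0

/-- Upper triangular invertible matrices. -/
def UTSet (M : ℕ) : Set (GL (Fin M) F) :=
  { g | ∀ i j : Fin M, (j : ℕ) < (i : ℕ) → g.val i j = 0 }

/-- The subgroup `H_{a,b} = j(Sp_a × Sp_b)` of `Sp_{a+b}` (as a set). -/
def HSet (a b : ℕ) : Set (GL (Fin (2 * (a + b))) F) :=
  { g | ∃ h1 : GL (Fin (2 * a)) F, h1 ∈ SpSet F a ∧
        ∃ h2 : GL (Fin (2 * b)) F, h2 ∈ SpSet F b ∧ g.val = jEmbed F a b h1.val h2.val }

/-- The subgroup `P₀^H = j(B_a × B_b)`, `B_c` the upper triangular subgroup of `Sp_c`. -/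
def P0HSp (a b : ℕ) : Set (GL (Fin (2 * (a + b))) F) :=
  { g | ∃ h1 : GL (Fin (2 * a)) F, h1 ∈ SpSet F a ∩ UTSet F (2 * a) ∧
        ∃ h2 : GL (Fin (2 * b)) F, h2 ∈ SpSet F b ∩ UTSet F (2 * b) ∧
          g.val = jEmbed F a b h1.val h2.val }

/-- A monomial matrix: exactly one nonzero entry in each row and in each column. -/
def IsMonomial {M : ℕ} (A : Matrix (Fin M) (Fin M) F) : Prop :=
  (∀ i, ∃! j, A i j ≠ 0) ∧ (∀ j, ∃! i, A i j ≠ 0)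

/-- Conjugation `g S g⁻¹` of a set by a group element. -/
def conjSet {M : ℕ} (g : GL (Fin M) F) (S : Set (GL (Fin M) F)) : Set (GL (Fin M) F) :=
  (fun h => g * h * g⁻¹) '' S

/-- Conjugation `σ S σ⁻¹` by the permutation matrix of `σ`. -/
def conjPerm {M : ℕ} (σ : Equiv.Perm (Fin M)) (S : Set (GL (Fin M) F)) :
    Set (GL (Fin M) F) :=
  { g | ∃ p ∈ S, g.val = (p.val).submatrix σ.symm σ.symm }

def blkPair {k : ℕ} (aT bT : Fin k → ℕ) (x : ℕ) : ℕ :=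
  ((Finset.range k).filter (fun j => psum aT (j + 1) + psum bT (j + 1) ≤ x)).card

def isBTab {k : ℕ} (aT bT : Fin k → ℕ) (x : ℕ) : Bool :=
  decide (psum aT (blkPair aT bT x + 1) + psum bT (blkPair aT bT x) ≤ x)

/-- The permutation `σ_T` attached to a table `T = (aT, bT)` (GL recipe). -/
noncomputable def sigmaTab (N : ℕ) {k : ℕ} (aT bT : Fin k → ℕ) : Equiv.Perm (Fin N) :=
  (Tuple.sort (fun x : Fin N => isBTab aT bT (x : ℕ)))⁻¹




section Aux

variable {F}

lemma psum_eq_sum {k : ℕ} (n : Fin k → ℕ) : psum n k = ∑ i, n i := by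
  rw [psum, ← Fin.sum_univ_eq_sum_range]
  exact Finset.sum_congr rfl fun i _ => by simp [nExt]

lemma sum_cSp_of_le {k : ℕ} (n : Fin k → ℕ) (r : ℕ) {j : ℕ} (hj : j ≤ k) :
    ∑ x ∈ Finset.range j, cSp n r x = psum n j :=
  Finset.sum_congr rfl fun x hx => by
    rw [Finset.mem_range] at hx
    simp [cSp, show x < k by omega]

lemma sum_cSp_succ_k {k : ℕ} (n : Fin k → ℕ) (r : ℕ) :
    ∑ x ∈ Finset.range (k + 1), cSp n r x = psum n k + 2 * r := by
  rw [Finset.sum_range_succ, sum_cSp_of_le n r le_rfl]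
  simp [cSp]

lemma blk_lt {k : ℕ} (n : Fin k → ℕ) (r N : ℕ) (hk : 1 ≤ k)
    (hsum : psum n k + r = N) {i : ℕ} (hi : i < psum n k) :
    blkIdxF (cSp n r) (2 * k + 1) i < blkIdxF (cSp n r) (2 * k + 1) (2 * N - 1 - i) := by
  have h1 : blkIdxF (cSp n r) (2 * k + 1) i ≤ k - 1 := by
    have hss : ((Finset.range (2 * k + 1)).filter
        (fun j => (∑ x ∈ Finset.range (j + 1), cSp n r x) ≤ i)) ⊆ Finset.range (k - 1) := by
      intro j hj
      simp only [Finset.mem_filter, Finset.mem_range] at hj ⊢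
      by_contra hjk
      push_neg at hjk
      have hsub : ∑ x ∈ Finset.range k, cSp n r x ≤ ∑ x ∈ Finset.range (j + 1), cSp n r x :=
        Finset.sum_le_sum_of_subset (Finset.range_subset_range.2 (by omega))
      rw [sum_cSp_of_le n r le_rfl] at hsub
      omega
    calc blkIdxF (cSp n r) (2 * k + 1) i ≤ (Finset.range (k-1)).card :=
          Finset.card_le_card hss
    _ = k - 1 := Finset.card_range _
  have h2 : k + 1 ≤ blkIdxF (cSp n r) (2 * k + 1) (2 * N - 1 - i) := by
    have hs : Finset.range (k + 1) ⊆ ((Finset.range (2 * k + 1)).filter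
        (fun j => (∑ x ∈ Finset.range (j + 1), cSp n r x) ≤ 2 * N - 1 - i)) := by
      intro j hj
      simp only [Finset.mem_range] at hj
      simp only [Finset.mem_filter, Finset.mem_range]
      refine ⟨by omega, ?_⟩
      have hsub : ∑ x ∈ Finset.range (j + 1), cSp n r x
          ≤ ∑ x ∈ Finset.range (k + 1), cSp n r x :=
        Finset.sum_le_sum_of_subset (Finset.range_subset_range.2 (by omega))
      rw [sum_cSp_succ_k] at hsub
      omega
    have := Finset.card_le_card hs
    rwa [Finset.card_range] at this
  omega

end Aux

section AuxMat

lemma Jmat_apply (N : ℕ) (i j : Fin (2 * N)) :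
    Jmat F N i j = if (i : ℕ) + (j : ℕ) = 2 * N - 1
      then (if (i : ℕ) < N then (1:F) else -1) else 0 := rfl

lemma Jmul_std (N t : ℕ) (ht : t < N) :
    Jmat F N * Matrix.single (⟨t, by omega⟩ : Fin (2*N))
        (⟨2*N-1-t, by omega⟩ : Fin (2*N)) (1:F)
      = Matrix.single (⟨2*N-1-t, by omega⟩ : Fin (2*N))
        (⟨2*N-1-t, by omega⟩ : Fin (2*N)) (-1) := by
  ext x z
  by_cases hz : z = (⟨2*N-1-t, by omega⟩ : Fin (2*N))
  · subst hz
    rw [Matrix.mul_single_apply_same, mul_one]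
    by_cases hx : x = (⟨2*N-1-t, by omega⟩ : Fin (2*N))
    · subst hx
      rw [Matrix.single_apply_same, Jmat_apply]
      rw [if_pos (by simp; omega), if_neg (by simp; omega)]
    · rw [Matrix.single_apply_of_row_ne (Ne.symm hx), Jmat_apply, if_neg]
      simp only [Fin.ext_iff] at hx ⊢
      omega
  · rw [Matrix.mul_single_apply_of_ne _ _ _ _ _ hz,
      Matrix.single_apply_of_col_ne _ _ (Ne.symm hz)]

lemma std_mulJ (N t : ℕ) (ht : t < N) :
    Matrix.single (⟨2*N-1-t, by omega⟩ : Fin (2*N))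
        (⟨t, by omega⟩ : Fin (2*N)) (1:F) * Jmat F N
      = Matrix.single (⟨2*N-1-t, by omega⟩ : Fin (2*N))
        (⟨2*N-1-t, by omega⟩ : Fin (2*N)) 1 := by
  ext x z
  by_cases hx : x = (⟨2*N-1-t, by omega⟩ : Fin (2*N))
  · subst hx
    rw [Matrix.single_mul_apply_same, one_mul]
    by_cases hz : z = (⟨2*N-1-t, by omega⟩ : Fin (2*N))
    · subst hz
      rw [Matrix.single_apply_same, Jmat_apply]
      rw [if_pos (by simp; omega), if_pos (by simp; omega)]
    · rw [Matrix.single_apply_of_col_ne _ _ (Ne.symm hz), Jmat_apply, if_neg]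
      simp only [Fin.ext_iff] at hz ⊢
      omega
  · rw [Matrix.single_mul_apply_of_ne _ _ _ _ _ hx,
      Matrix.single_apply_of_row_ne (Ne.symm hx)]

lemma sp_unip (N t : ℕ) (ht : t < N) :
    (1 + Matrix.single (⟨t, by omega⟩ : Fin (2*N))
        (⟨2*N-1-t, by omega⟩ : Fin (2*N)) (1:F))ᵀ
      * Jmat F N
      * (1 + Matrix.single (⟨t, by omega⟩ : Fin (2*N))
          (⟨2*N-1-t, by omega⟩ : Fin (2*N)) (1:F))
      = Jmat F N := by
  set tA : Fin (2*N) := ⟨t, by omega⟩ with htA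
  set uA : Fin (2*N) := ⟨2*N-1-t, by omega⟩ with huA
  have hne : tA ≠ uA := by
    apply Fin.ne_of_val_ne
    show t ≠ 2*N-1-t
    omega
  have hTr : (1 + Matrix.single tA uA (1:F))ᵀ
      = 1 + Matrix.single uA tA (1:F) := by
    rw [Matrix.transpose_add, Matrix.transpose_one]
    congr 1
    ext x z
    simp only [Matrix.transpose_apply, Matrix.single, Matrix.of_apply]
    exact if_congr and_comm rfl rfl
  rw [hTr]
  have h1 : Jmat F N * (1 + Matrix.single tA uA (1:F))
      = Jmat F N + Matrix.single uA uA (-1) := by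
    rw [mul_add, mul_one, Jmul_std F N t ht]
  rw [mul_assoc, h1, add_mul, one_mul, mul_add, std_mulJ F N t ht,
    Matrix.single_mul_single_of_ne _ _ _ _ hne, add_zero,
    show Matrix.single (⟨2*N-1-t, by omega⟩:Fin (2*N))
      (⟨2*N-1-t, by omega⟩:Fin (2*N)) (1:F) = Matrix.single uA uA 1 from rfl]
  have hz : Matrix.single uA uA (-1:F) + Matrix.single uA uA (1:F) = 0 := by
    rw [← Matrix.single_add]
    norm_num
  rw [add_assoc, hz, add_zero]

/-- The unipotent element `1 + E_{pq}` as an invertible matrix. -/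
def unipGL {M : ℕ} (p q : Fin M) (hpq : p ≠ q) : GL (Fin M) F where
  val := 1 + Matrix.single p q (1:F)
  inv := 1 - Matrix.single p q (1:F)
  val_inv := by
    have hEE : Matrix.single p q (1:F) * Matrix.single p q (1:F) = 0 :=
      Matrix.single_mul_single_of_ne _ _ _ _ (Ne.symm hpq) _
    have h : (1 + Matrix.single p q (1:F)) * (1 - Matrix.single p q (1:F))
        = 1 - Matrix.single p q (1:F) * Matrix.single p q (1:F) := by
      noncomm_ring
    rw [h, hEE, sub_zero]
  inv_val := by
    have hEE : Matrix.single p q (1:F) * Matrix.single p q (1:F) = 0 :=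
      Matrix.single_mul_single_of_ne _ _ _ _ (Ne.symm hpq) _
    have h : (1 - Matrix.single p q (1:F)) * (1 + Matrix.single p q (1:F))
        = 1 - Matrix.single p q (1:F) * Matrix.single p q (1:F) := by
      noncomm_ring
    rw [h, hEE, sub_zero]

@[simp] lemma unipGL_val {M : ℕ} (p q : Fin M) (hpq : p ≠ q) :
    (unipGL F p q hpq).val = 1 + Matrix.single p q (1:F) := rfl

lemma unip_UT {M : ℕ} (p q : Fin M) (hpq : (p:ℕ) < (q:ℕ)) (i j : Fin M)
    (hij : (j:ℕ) < (i:ℕ)) : (1 + Matrix.single p q (1:F)) i j = 0 := by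
  rw [Matrix.add_apply, Matrix.one_apply_ne (Fin.ne_of_val_ne (by omega)),
    Matrix.single_apply_of_ne, add_zero]
  rintro ⟨rfl, rfl⟩
  omega

lemma jEmbed_case1 (a b t : ℕ) (ht : t < a) :
    jEmbed F a b
      (1 + Matrix.single (⟨t, by omega⟩ : Fin (2*a))
        (⟨2*a-1-t, by omega⟩ : Fin (2*a)) (1:F))
      (1 : Matrix (Fin (2*b)) (Fin (2*b)) F)
    = 1 + Matrix.single (⟨t, by omega⟩ : Fin (2*(a+b)))
        (⟨2*(a+b)-1-t, by omega⟩ : Fin (2*(a+b))) (1:F) := by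
  ext x z
  have hx := x.isLt
  have hz := z.isLt
  simp only [jEmbed, Matrix.add_apply, Matrix.one_apply, Matrix.single,
    Matrix.of_apply, Fin.ext_iff, Fin.val_mk]
  split_ifs <;> first | rfl | (exfalso; omega) | norm_num

lemma jEmbed_case2 (a b t : ℕ) (hat : a ≤ t) (ht : t < a + b) :
    jEmbed F a b (1 : Matrix (Fin (2*a)) (Fin (2*a)) F)
      (1 + Matrix.single (⟨t-a, by omega⟩ : Fin (2*b))
        (⟨2*b-1-(t-a), by omega⟩ : Fin (2*b)) (1:F))
    = 1 + Matrix.single (⟨t, by omega⟩ : Fin (2*(a+b)))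
        (⟨2*(a+b)-1-t, by omega⟩ : Fin (2*(a+b))) (1:F) := by
  ext x z
  have hx := x.isLt
  have hz := z.isLt
  simp only [jEmbed, Matrix.add_apply, Matrix.one_apply, Matrix.single,
    Matrix.of_apply, Fin.ext_iff, Fin.val_mk]
  split_ifs <;> first | rfl | (exfalso; omega) | norm_num

lemma one_mem_Sp_UT (N : ℕ) : (1 : GL (Fin (2*N)) F) ∈ SpSet F N ∩ UTSet F (2*N) := by
  constructor
  · show ((1 : GL (Fin (2*N)) F).val)ᵀ * Jmat F N * (1 : GL (Fin (2*N)) F).val = Jmat F N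
    simp
  · intro i j hij
    show (1 : Matrix (Fin (2*N)) (Fin (2*N)) F) i j = 0
    exact Matrix.one_apply_ne (Fin.ne_of_val_ne (by omega))

end AuxMat

lemma mem_P0H (a b t : ℕ) (htN : t < a + b) (tF m : Fin (2*(a+b)))
    (htFval : (tF:ℕ) = t) (hmval : (m:ℕ) = 2*(a+b)-1-t) (hne : tF ≠ m) :
    ∃ p : GL (Fin (2*(a+b))) F, p.val = 1 + Matrix.single tF m (1:F)
      ∧ p ∈ P0HSp F a b := by
  refine ⟨unipGL F tF m hne, rfl, ?_⟩
  have htF' : tF = (⟨t, by omega⟩ : Fin (2*(a+b))) := Fin.ext htFval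
  have hm' : m = (⟨2*(a+b)-1-t, by omega⟩ : Fin (2*(a+b))) := Fin.ext hmval
  rcases lt_or_ge t a with hta | hta
  · refine ⟨unipGL F (⟨t, by omega⟩ : Fin (2*a)) (⟨2*a-1-t, by omega⟩ : Fin (2*a))
      (Fin.ne_of_val_ne (by show t ≠ 2*a-1-t; omega)), ⟨?_, ?_⟩, 1, one_mem_Sp_UT F b, ?_⟩
    · exact sp_unip F a t hta
    · intro i' j' hij'
      exact unip_UT F _ _ (by show t < 2*a-1-t; omega) i' j' hij'
    · show (1 : Matrix (Fin (2*(a+b))) (Fin (2*(a+b))) F) + _ = _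
      simp only [htF', hm']
      exact (jEmbed_case1 F a b t hta).symm
  · refine ⟨1, one_mem_Sp_UT F a, unipGL F (⟨t-a, by omega⟩ : Fin (2*b))
      (⟨2*b-1-(t-a), by omega⟩ : Fin (2*b))
      (Fin.ne_of_val_ne (by show t-a ≠ 2*b-1-(t-a); omega)), ⟨?_, ?_⟩, ?_⟩
    · exact sp_unip F b (t-a) (by omega)
    · intro i' j' hij'
      exact unip_UT F _ _ (by show t-a < 2*b-1-(t-a); omega) i' j' hij'
    · show (1 : Matrix (Fin (2*(a+b))) (Fin (2*(a+b))) F) + _ = _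
      simp only [htF', hm']
      exact (jEmbed_case2 F a b t hta htN).symm

/-- Let `w̃ ∈ Sp_{a+b}(F)` be a monomial matrix inducing the signed
permutation `w = τ𝔠` of `[0, N)` (for `i < N`, the `i`-th column of `w̃` is supported in row
`τ i` if `i ∉ 𝔠` and in row `2N - 1 - τ i` if `i ∈ 𝔠`).  If `𝔠 ⊆ [0, ν_k)` with
`ν_k = n_1 + ⋯ + n_k` and `w̃ P_α w̃⁻¹` contains `P₀^H = j(B_a × B_b)`, then `𝔠 = ∅`. -/
theorem stmt5 (a b k : ℕ) (n : Fin k → ℕ) (r : ℕ) (hn : ∀ i, 0 < n i)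
    (hsum : (∑ i, n i) + r = a + b)
    (w : GL (Fin (2 * (a + b))) F) (hSp : w ∈ SpSet F (a + b)) (hMon : IsMonomial F w.val)
    (τ : Equiv.Perm (Fin (a + b))) (c : Finset (Fin (a + b)))
    (hw : ∀ (i : Fin (a + b)) (row : Fin (2 * (a + b))),
      w.val row (Fin.castLE (by omega) i) ≠ 0 →
        (row : ℕ) = if i ∈ c then 2 * (a + b) - 1 - (τ i : ℕ) else (τ i : ℕ))
    (hc : ∀ i ∈ c, (i : ℕ) < ∑ i, n i)
    (hcont : P0HSp F a b ⊆ conjSet F w (PparSp F (a + b) n r)) :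
    c = ∅ := by
  by_contra hcne
  obtain ⟨i, hi⟩ := Finset.nonempty_iff_ne_empty.2 hcne
  have hik : (i:ℕ) < ∑ j, n j := hc i hi
  have hkpos : 1 ≤ k := by
    rcases Nat.eq_zero_or_pos k with rfl | hk
    · simpa using hik
    · exact hk
  have hiN : (i:ℕ) < a + b := i.isLt
  have htN : (τ i : ℕ) < a + b := (τ i).isLt
  set t : ℕ := (τ i : ℕ) with htdef
  obtain ⟨y, hyval⟩ : ∃ v : Fin (2*(a+b)), (v:ℕ) = (i:ℕ) :=
    ⟨Fin.castLE (by omega) i, rfl⟩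
  obtain ⟨m, hmval⟩ : ∃ v : Fin (2*(a+b)), (v:ℕ) = 2*(a+b)-1-t := ⟨⟨2*(a+b)-1-t, by omega⟩, rfl⟩
  obtain ⟨tF, htFval⟩ : ∃ v : Fin (2*(a+b)), (v:ℕ) = t := ⟨⟨t, by omega⟩, rfl⟩
  obtain ⟨x₀, hx0val⟩ : ∃ v : Fin (2*(a+b)), (v:ℕ) = 2*(a+b)-1-(i:ℕ) := ⟨⟨2*(a+b)-1-(i:ℕ), by omega⟩, rfl⟩
  have hyeq : y = Fin.castLE (by omega) i := Fin.ext hyval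
  -- the nonzero entry of column y is in row m
  have hcolY : ∀ row, w.val row y ≠ 0 → row = m := by
    intro row h
    rw [hyeq] at h
    have h2 := hw i row h
    rw [if_pos hi] at h2
    exact Fin.ext (by omega)
  have hmy : w.val m y ≠ 0 := by
    obtain ⟨row, hrow, -⟩ := hMon.2 y
    rwa [hcolY row hrow] at hrow
  -- symplecticity forces the nonzero entry of column x₀ to lie in row tF
  have hL1 : ∀ v : Fin (2*(a+b)), ((w.val)ᵀ * Jmat F (a+b)) y v
      = w.val m y * Jmat F (a+b) m v := by
    intro v
    rw [Matrix.mul_apply]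
    refine Finset.sum_eq_single m ?_ ?_
    · intro u _ hu
      rw [Matrix.transpose_apply]
      rcases eq_or_ne (w.val u y) 0 with h0 | h0
      · rw [h0, zero_mul]
      · exact absurd (hcolY u h0) hu
    · intro h
      exact absurd (Finset.mem_univ m) h
  have hJ : ((w.val)ᵀ * Jmat F (a+b) * w.val) y x₀ = Jmat F (a+b) y x₀ := by rw [hSp]
  have hL2 : ((w.val)ᵀ * Jmat F (a+b) * w.val) y x₀
      = w.val m y * Jmat F (a+b) m tF * w.val tF x₀ := by
    rw [Matrix.mul_apply]
    have hsum2 : ∑ v, ((w.val)ᵀ * Jmat F (a+b)) y v * w.val v x₀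
        = ((w.val)ᵀ * Jmat F (a+b)) y tF * w.val tF x₀ := by
      refine Finset.sum_eq_single tF ?_ ?_
      · intro v _ hv
        rw [hL1]
        have hvt : (v:ℕ) ≠ t := fun h => hv (Fin.ext (h.trans htFval.symm))
        have hJ0 : Jmat F (a+b) m v = 0 := by
          rw [Jmat_apply, if_neg]
          have := v.isLt
          omega
        rw [hJ0, mul_zero, zero_mul]
      · intro h
        exact absurd (Finset.mem_univ tF) h
    rw [hsum2, hL1]
  have hJmt : Jmat F (a+b) m tF = -1 := by
    rw [Jmat_apply, if_pos (by omega), if_neg (by omega)]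
  have hJyx : Jmat F (a+b) y x₀ = 1 := by
    rw [Jmat_apply, if_pos (by omega), if_pos (by omega)]
  have hkey : w.val m y * (-1) * w.val tF x₀ = 1 := by
    rw [← hJmt, ← hL2, hJ, hJyx]
  have htx : w.val tF x₀ ≠ 0 := by
    intro h0
    rw [h0, mul_zero] at hkey
    exact one_ne_zero hkey.symm
  have hrowT : ∀ v, v ≠ x₀ → w.val tF v = 0 := by
    intro v hv
    by_contra h0
    obtain ⟨col, hcol, huniq⟩ := hMon.1 tF
    exact hv ((huniq v h0).trans (huniq x₀ htx).symm)
  -- the witness in P₀^H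
  have hne : tF ≠ m := by
    apply Fin.ne_of_val_ne
    rw [htFval, hmval]
    omega
  obtain ⟨pGL, hpval, hmem⟩ := mem_P0H F a b t htN tF m htFval hmval hne
  obtain ⟨q, hqmem, hq⟩ := hcont hmem
  have hqw : pGL * w = w * q := by
    rw [← hq, mul_assoc, mul_assoc, inv_mul_cancel, mul_one]
  have hmat : pGL.val * w.val = w.val * q.val := by
    have := congrArg Units.val hqw
    simpa using this
  have hentry : (pGL.val * w.val) tF y = (w.val * q.val) tF y := by rw [hmat]
  have hLHS : (pGL.val * w.val) tF y = w.val m y := by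
    rw [hpval, Matrix.add_mul, Matrix.one_mul, Matrix.add_apply,
      Matrix.single_mul_apply_same, one_mul]
    have h0 : w.val tF y = 0 := by
      by_contra h0
      exact hne (hcolY tF h0)
    rw [h0, zero_add]
  have hRHS : (w.val * q.val) tF y = 0 := by
    rw [Matrix.mul_apply]
    rw [Finset.sum_eq_single x₀ (fun v _ hv => by rw [hrowT v hv, zero_mul])
      (fun h => absurd (Finset.mem_univ x₀) h)]
    have hblk : blkIdxF (cSp n r) (2 * k + 1) ((y:ℕ))
        < blkIdxF (cSp n r) (2 * k + 1) ((x₀:ℕ)) := by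
      rw [hyval, hx0val]
      exact blk_lt n r (a+b) hkpos (by rw [psum_eq_sum]; exact hsum)
        (by rw [psum_eq_sum]; exact hik)
    rw [hqmem.2 x₀ y hblk, mul_zero]
  rw [hentry, hRHS] at hLHS
  exact hmy hLHS.symm

end Stmt5
end
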